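/- arXiv:1106.3088 — 6 statements merged into one kernel-verified Lean document; each statement's English description precedes it below -/
import Mathlib

section
/- Let P = (R, G) be a commutative partial field, let X and E be finite sets with |X| = r, and let A be an X×E matrix over R such that det(A[X,B]) ∈ G ∪ {0} for every B ⊆ E with |B| = r, and such that det(A[X,B₀]) ≠ 0 for at least one such B₀. Then there exists a matroid on ground set E whose bases are exactly the sets B ⊆ E with |B| = r and det(A[X,B]) ≠ 0. -/
open Matrix

attribute [local instance] Ideal.Quotient.field

/-- Let `P = (R, G)` be a commutative partial field (`R` a commutative ring,
`G` a subgroup of `Rˣ` with `-1 ∈ G`), let `X` and `E` be finite sets with `|X| = r`, and let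
`A` be an `X × E` matrix over `R` such that `det A[X,B] ∈ G ∪ {0}` for every `B ⊆ E` with
`|B| = r`, and `det A[X,B₀] ≠ 0` for at least one such `B₀`. Then there is a matroid on `E`
whose bases are exactly the `r`-element sets `B` with `det A[X,B] ≠ 0`. -/
theorem statement0 {R : Type*} [CommRing R] (G : Subgroup Rˣ) (hG : (-1 : Rˣ) ∈ G)
    {X E : Type*} [Fintype X] [DecidableEq X] [Fintype E] [DecidableEq E]
    (r : ℕ) (hXr : Fintype.card X = r) (A : Matrix X E R)
    (hweak : ∀ B : Finset E, B.card = r → ∀ f : X ≃ B,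
      (A.submatrix id (fun x => (f x : E))).det = 0 ∨
        ∃ g ∈ G, (A.submatrix id (fun x => (f x : E))).det = ((g : Rˣ) : R))
    (hnz : ∃ B : Finset E, B.card = r ∧ ∃ f : X ≃ B,
      (A.submatrix id (fun x => (f x : E))).det ≠ 0) :
    ∃ M : Matroid E, M.E = Set.univ ∧
      ∀ B : Finset E, M.IsBase (B : Set E) ↔ B.card = r ∧
        ∃ f : X ≃ B, (A.submatrix id (fun x => (f x : E))).det ≠ 0 := by
  classical
  obtain ⟨B₀, hB₀card, f₀, hf₀⟩ := hnz
  haveI : Nontrivial R := nontrivial_of_ne _ _ hf₀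
  obtain ⟨m, hm⟩ := Ideal.exists_maximal R
  haveI := hm
  set φ := Ideal.Quotient.mk m with hφ
  set A' : Matrix X E (R ⧸ m) := A.map φ with hA'
  set col : E → (X → R ⧸ m) := fun e => fun x => A' x e with hcol
  -- nonvanishing of determinants is preserved by φ
  have keydet : ∀ (B : Finset E), B.card = r → ∀ f : X ≃ B,
      ((A'.submatrix id (fun x => (f x : E))).det ≠ 0 ↔
        (A.submatrix id (fun x => (f x : E))).det ≠ 0) := by
    intro B hB f
    have hmap : (A'.submatrix id (fun x => (f x : E))).det
        = φ (A.submatrix id (fun x => (f x : E))).det := by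
      rw [RingHom.map_det]
      rfl
    constructor
    · intro h h0
      rw [hmap, h0, map_zero] at h
      exact h rfl
    · intro h
      rcases hweak B hB f with h0 | ⟨g, _, hg⟩
      · exact absurd h0 h
      · rw [hmap, hg]
        exact (g.isUnit.map φ).ne_zero
  -- independence predicate
  set Indep : Set E → Prop := fun I => LinearIndependent (R ⧸ m) (fun e : I => col e)
    with hIndep
  -- independence of an r-set is equivalent to nonvanishing determinant
  have detiff : ∀ (B : Finset E), B.card = r → ∀ f : X ≃ B,
      (Indep (B : Set E) ↔ (A'.submatrix id (fun x => (f x : E))).det ≠ 0) := by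
    intro B hB f
    have e1 : Indep (B : Set E) ↔ LinearIndependent (R ⧸ m)
        (Matrix.col (A'.submatrix id (fun x => (f x : E)))) :=
      (linearIndependent_equiv f).symm
    rw [e1, Matrix.linearIndependent_cols_iff_isUnit,
      Matrix.isUnit_iff_isUnit_det, isUnit_iff_ne_zero]
  -- cardinality bound for independent sets
  have card_le : ∀ I : Set E, Indep I → I.ncard ≤ r := by
    intro I hI
    haveI : Fintype I := I.toFinite.fintype
    have h := hI.fintype_card_le_finrank
    rw [Module.finrank_pi, hXr] at h
    rwa [Set.ncard_eq_toFinset_card' I, Set.toFinset_card]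
  -- the matroid
  set M : Matroid E := (IndepMatroid.ofFinite (Set.finite_univ (α := E)) Indep
    (by
      rw [hIndep]
      haveI : IsEmpty (↥(∅ : Set E)) := Set.isEmpty_coe_sort.2 rfl
      exact linearIndependent_empty_type)
    (by
      intro I J hJ hIJ
      exact hJ.comp (Set.inclusion hIJ) (Set.inclusion_injective hIJ))
    (by
      intro I J hI hJ hlt
      by_contra h'
      push_neg at h'
      have hspan : ∀ e ∈ J, col e ∈ Submodule.span (R ⧸ m) (col '' I) := by
        intro e he
        by_cases heI : e ∈ I
        · exact Submodule.subset_span (Set.mem_image_of_mem _ heI)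
        · have hni := h' e he heI
          by_contra hns
          exact hni ((linearIndepOn_insert (f := col) heI).2 ⟨hI, hns⟩)
      haveI : Fintype J := J.toFinite.fintype
      haveI : Fintype (col '' I) := (I.toFinite.image col).fintype
      have hle : Fintype.card J ≤ Fintype.card (col '' I) := by
        apply linearIndependent_le_span_aux' _ hJ
        rintro v ⟨⟨e, he⟩, rfl⟩
        exact hspan e he
      have h1 : J.ncard ≤ (col '' I).ncard := by
        rwa [Set.ncard_eq_toFinset_card' J, Set.toFinset_card,
          Set.ncard_eq_toFinset_card' (col '' I), Set.toFinset_card]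
      have h2 : (col '' I).ncard ≤ I.ncard := Set.ncard_image_le I.toFinite
      omega)
    (fun I _ => Set.subset_univ I)).matroid with hM
  have hMindep : ∀ I : Set E, M.Indep I ↔ Indep I := by
    intro I
    rw [hM, IndepMatroid.matroid_indep_iff, IndepMatroid.ofFinite_indep]
  refine ⟨M, by rw [hM]; simp, ?_⟩
  -- main characterization
  have main : ∀ B : Finset E, B.card = r →
      (∃ f : X ≃ B, (A.submatrix id (fun x => (f x : E))).det ≠ 0) → M.IsBase (B : Set E) := by
    intro B hB h
    obtain ⟨f, hf⟩ := h
    have hind : Indep (B : Set E) := (detiff B hB f).2 ((keydet B hB f).2 hf)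
    refine ((hMindep _).2 hind).isBase_of_maximal ?_
    intro J hJ hBJ
    refine Set.eq_of_subset_of_ncard_le hBJ ?_ (Set.toFinite J)
    rw [Set.ncard_coe_finset, hB]
    exact card_le J ((hMindep _).1 hJ)
  intro B
  constructor
  · intro hBase
    have hB₀base : M.IsBase (B₀ : Set E) := main B₀ hB₀card ⟨f₀, hf₀⟩
    have hcard : B.card = r := by
      have := hBase.ncard_eq_ncard_of_isBase hB₀base
      rwa [Set.ncard_coe_finset, Set.ncard_coe_finset, hB₀card] at this
    have hcards : Fintype.card X = Fintype.card B := by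
      rw [hXr, Fintype.card_coe, hcard]
    refine ⟨hcard, Fintype.equivOfCardEq hcards, ?_⟩
    exact ((keydet B hcard _).1 ((detiff B hcard _).1 ((hMindep _).1 hBase.indep)))
  · rintro ⟨hB, f, hf⟩
    exact main B hB ⟨f, hf⟩
end

section
/- Let 𝔻 = (ℤ[1/2], ⟨−1, 2⟩) be the dyadic partial field, where ℤ[1/2] is the subring of ℚ consisting of all rationals whose denominator is a power of 2, and ⟨−1, 2⟩ = {±2^z : z ∈ ℤ} is the multiplicative group generated by −1 and 2. If a matroid M is representable over 𝔻, then M is representable over the partial field (ℚ, ℚ*), and M is representable over the partial field (F, F*) for every finite field F of odd characteristic. -/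
open Matrix

/-- The subring `ℤ[1/2]` of `ℚ`: all rationals whose denominator is a power of two. -/
def DyadicSubring : Subring ℚ where
  carrier := {q : ℚ | ∃ (a : ℤ) (n : ℕ), q * 2 ^ n = a}
  zero_mem' := ⟨0, 0, by norm_num⟩
  one_mem' := ⟨1, 0, by norm_num⟩
  add_mem' := by
    rintro x y ⟨a, n, ha⟩ ⟨b, m, hb⟩
    refine ⟨a * 2 ^ m + b * 2 ^ n, n + m, ?_⟩
    push_cast
    rw [pow_add]
    linear_combination (2 : ℚ) ^ m * ha + (2 : ℚ) ^ n * hb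
  mul_mem' := by
    rintro x y ⟨a, n, ha⟩ ⟨b, m, hb⟩
    refine ⟨a * b, n + m, ?_⟩
    push_cast
    rw [pow_add]
    linear_combination (y * 2 ^ m) * ha + (a : ℚ) * hb
  neg_mem' := by
    rintro x ⟨a, n, ha⟩
    exact ⟨-a, n, by push_cast; linarith⟩

/-- `2` as a unit of the dyadic ring. -/
def dyadicTwo : DyadicSubringˣ where
  val := ⟨2, 2, 0, by norm_num⟩
  inv := ⟨2⁻¹, 1, 1, by norm_num⟩
  val_inv := by ext; norm_num
  inv_val := by ext; norm_num

/-- The subgroup `⟨-1, 2⟩ = {± 2 ^ z : z ∈ ℤ}` of the units of the dyadic ring. -/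
def dyadicGroup : Subgroup DyadicSubringˣ := Subgroup.closure {-1, dyadicTwo}

/-- A matroid `M` is representable over the commutative partial field `(R, G)` if there is a
weak `(R,G)`-matrix `A` (all maximal square subdeterminants lie in `G ∪ {0}`, and at least one
is nonzero) such that the bases of `M` are exactly the `r`-element column sets of `A` with
nonzero determinant. -/
def PFRepresentable {R : Type*} [CommRing R] (G : Subgroup Rˣ)
    {E : Type*} [Fintype E] [DecidableEq E] (M : Matroid E) : Prop :=
  ∃ (r : ℕ) (A : Matrix (Fin r) E R),
    (∀ B : Finset E, B.card = r → ∀ f : Fin r ≃ B,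
      (A.submatrix id (fun x => (f x : E))).det = 0 ∨
        ∃ g ∈ G, (A.submatrix id (fun x => (f x : E))).det = ((g : Rˣ) : R)) ∧
    (∃ B : Finset E, B.card = r ∧ ∃ f : Fin r ≃ B,
      (A.submatrix id (fun x => (f x : E))).det ≠ 0) ∧
    M.E = Set.univ ∧
    (∀ B : Finset E, M.IsBase (B : Set E) ↔ B.card = r ∧
      ∃ f : Fin r ≃ B, (A.submatrix id (fun x => (f x : E))).det ≠ 0)

section AuxPre

lemma dyadicTwo_val_eq : ((dyadicTwo : DyadicSubringˣ) : DyadicSubring) = ((2 : ℤ) : DyadicSubring) := by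
  ext
  simp [dyadicTwo]
  norm_cast

instance : IsLocalization.Away (2 : ℤ) DyadicSubring where
  map_units := by
    rintro ⟨y, n, rfl⟩
    refine ⟨dyadicTwo ^ n, ?_⟩
    rw [Units.val_pow_eq_pow_val, dyadicTwo_val_eq]
    push_cast
    rfl
  surj := by
    rintro ⟨z, a, n, ha⟩
    refine ⟨⟨a, ⟨2 ^ n, n, rfl⟩⟩, ?_⟩
    ext
    push_cast
    exact ha
  exists_of_eq := by
    intro x y h
    refine ⟨1, ?_⟩
    have : ((x : ℤ) : ℚ) = ((y : ℤ) : ℚ) := congrArg Subtype.val h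
    have hxy : x = y := by exact_mod_cast this
    rw [hxy]

/-- If there is a ring hom from the dyadic ring to a field `K`, then a matroid representable
over the dyadic partial field is representable over `(K, K*)`. -/
lemma aux_rep {K : Type*} [Field K] (φ : DyadicSubring →+* K)
    {E : Type*} [Fintype E] [DecidableEq E] {M : Matroid E}
    (hM : PFRepresentable dyadicGroup M) : PFRepresentable (⊤ : Subgroup Kˣ) M := by
  obtain ⟨r, A, h1, h2, h3, h4⟩ := hM
  have key : ∀ (B : Finset E) (f : Fin r ≃ B),
      (A.submatrix id (fun x => (f x : E))).det = 0 ↔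
      ((A.map φ).submatrix id (fun x => (f x : E))).det = 0 := by
    intro B f
    rw [Matrix.submatrix_map, ← RingHom.mapMatrix_apply, ← RingHom.map_det]
    constructor
    · intro h; rw [h, map_zero]
    · intro h
      by_contra hne
      have hB : B.card = r := by simpa using Finset.card_eq_of_equiv_fin f.symm
      rcases h1 B hB f with h0 | ⟨g, _, hg⟩
      · exact hne h0
      · rw [hg] at h
        exact (IsUnit.map φ g.isUnit).ne_zero h
  refine ⟨r, A.map φ, ?_, ?_, h3, ?_⟩
  · intro B hB f
    rcases eq_or_ne (((A.map φ).submatrix id (fun x => (f x : E))).det) 0 with h | h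
    · exact Or.inl h
    · exact Or.inr ⟨Units.mk0 _ h, Subgroup.mem_top _, rfl⟩
  · obtain ⟨B, hB, f, hf⟩ := h2
    exact ⟨B, hB, f, fun h => hf ((key B f).mpr h)⟩
  · intro B
    rw [h4 B]
    exact and_congr_right fun hB => exists_congr fun f => not_congr (key B f)

end AuxPre

/-- a matroid representable over the dyadic partial field
`𝔻 = (ℤ[1/2], ⟨-1, 2⟩)` is representable over `(ℚ, ℚ*)` and over `(F, F*)` for every
finite field `F` of odd characteristic. -/
theorem statement2 {E : Type*} [Fintype E] [DecidableEq E] (M : Matroid E)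
    (hM : PFRepresentable dyadicGroup M) :
    PFRepresentable (⊤ : Subgroup ℚˣ) M ∧
      ∀ (F : Type*) [Field F] [Fintype F], Odd (ringChar F) →
        PFRepresentable (⊤ : Subgroup Fˣ) M := by
  
  constructor
  · exact aux_rep DyadicSubring.subtype hM
  · intro F _ _ hodd
    have h2 : (2 : F) ≠ 0 := Ring.two_ne_zero (by
      rintro h; rw [h, Nat.odd_iff] at hodd; norm_num at hodd)
    have hu : IsUnit ((Int.castRingHom F) (2 : ℤ)) := by
      simpa using isUnit_iff_ne_zero.mpr h2
    exact aux_rep (IsLocalization.Away.lift (S := DyadicSubring) (2 : ℤ) hu) hM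
end

section
/- Let R be a ring, G a subgroup of the group of units R* of R with −1 ∈ G, E a finite set, and C an R-chain group on E. If c, c' ∈ C are G-primitive elementary chains with ‖c‖ = ‖c'‖, then c = g·c' (componentwise left multiplication) for some g ∈ G. -/
open Matrix Matroid

/-- The support of a chain `c : E → R`. -/
def chainSupport {R E : Type*} [Zero R] (c : E → R) : Set E := {e | c e ≠ 0}

/-- A chain of the chain group `C` is *elementary* if it is nonzero and no nonzero chain
of `C` has strictly smaller support. -/
def IsElementary {R E : Type*} [Zero R] (C : Set (E → R)) (c : E → R) : Prop :=
  c ∈ C ∧ c ≠ 0 ∧ ∀ c' ∈ C, c' ≠ (0 : E → R) → ¬ (chainSupport c' ⊂ chainSupport c)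

/-- A chain is `G`-primitive if all of its entries lie in `G ∪ {0}`. -/
def IsPrimitive {R E : Type*} [MonoidWithZero R] (G : Subgroup Rˣ) (c : E → R) : Prop :=
  ∀ e, c e = 0 ∨ ∃ g ∈ G, c e = ((g : Rˣ) : R)

/-- `C` is a chain group over the skew partial field `(R, G)` if every elementary chain of `C`
is a left `R`-multiple of a `G`-primitive chain of `C`. -/
def IsPChainGroup {R E : Type*} [Ring R] (G : Subgroup Rˣ) (C : Submodule R (E → R)) : Prop :=
  ∀ c, IsElementary (C : Set (E → R)) c →
    ∃ r : R, ∃ c' ∈ C, IsPrimitive G c' ∧ c = r • c'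

/-- A circuit of a matroid: a minimal dependent set. -/
def IsCircuit {E : Type*} (M : Matroid E) (X : Set E) : Prop :=
  ¬ M.Indep X ∧ ∀ Y, Y ⊂ X → M.Indep Y

/-- A cocircuit of a matroid: a circuit of the dual matroid. -/
def IsCocircuit {E : Type*} (M : Matroid E) (X : Set E) : Prop :=
  _root_.IsCircuit M✶ X

/-- `M` is "the" matroid `M(C)` of the chain group `C`: the ground set of `M` is all of `E`,
and the cocircuits of `M` are exactly the supports of the elementary chains of `C`. -/
def IsMatroidOf {R E : Type*} [Zero R] (M : Matroid E) (C : Set (E → R)) : Prop :=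
  M.E = Set.univ ∧
    ∀ X : Set E, _root_.IsCocircuit M X ↔ ∃ c, IsElementary C c ∧ chainSupport c = X

/-- The row span `{z ⬝ A : z ∈ R^X}` of a matrix, as a left `R`-submodule of `E → R`. -/
def rowSpan {R X E : Type*} [Ring R] [Fintype X] (A : Matrix X E R) :
    Submodule R (E → R) where
  carrier := {c | ∃ z : X → R, c = z ᵥ* A}
  add_mem' := by rintro a b ⟨z, rfl⟩ ⟨w, rfl⟩; exact ⟨z + w, (Matrix.add_vecMul A z w).symm⟩
  zero_mem' := ⟨0, (Matrix.zero_vecMul A).symm⟩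
  smul_mem' := by rintro r c ⟨z, rfl⟩; exact ⟨r • z, (Matrix.smul_vecMul r z A).symm⟩

/-- The deletion of `D` from the matroid `M`. -/
noncomputable def matroidDelete {α : Type*} (M : Matroid α) (D : Set α) : Matroid α :=
  M ↾ (M.E \ D)

/-- The contraction of `D` in the matroid `M`. -/
noncomputable def matroidContract {α : Type*} (M : Matroid α) (D : Set α) : Matroid α :=
  (M✶ ↾ (M✶.E \ D))✶

/-- The matroid `M` has rank `n`. -/
def RankEq {α : Type*} (M : Matroid α) (n : ℕ) : Prop :=
  ∃ B, M.IsBase B ∧ B.ncard = n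

/-- let `R` be a ring, `G ≤ Rˣ` with `-1 ∈ G`, `E` a finite set and `C` an
`R`-chain group on `E`.  If `c, c'` are `G`-primitive elementary chains of `C` with the same
support, then `c = g • c'` for some `g ∈ G`. -/
theorem statement3 {R E : Type*} [Ring R] [Fintype E]
    (G : Subgroup Rˣ) (hG : (-1 : Rˣ) ∈ G)
    (C : Submodule R (E → R)) (c c' : E → R)
    (hc : IsElementary (C : Set (E → R)) c) (hc' : IsElementary (C : Set (E → R)) c')
    (hpc : IsPrimitive G c) (hpc' : IsPrimitive G c')
    (hsupp : chainSupport c = chainSupport c') :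
    ∃ g ∈ G, c = fun e => ((g : Rˣ) : R) * c' e := by
  obtain ⟨hcC, hcne, hcmin⟩ := hc
  -- pick e with c e ≠ 0
  have : ∃ e, c e ≠ 0 := by
    by_contra h
    push_neg at h
    exact hcne (funext h)
  obtain ⟨e, he⟩ := this
  obtain (h0 | ⟨g, hgG, hg⟩) := hpc e
  · exact absurd h0 he
  have he' : c' e ≠ 0 := by
    have : e ∈ chainSupport c' := hsupp ▸ he
    exact this
  obtain (h0 | ⟨g', hg'G, hg'⟩) := hpc' e
  · exact absurd h0 he'
  set u : Rˣ := g * g'⁻¹ with hu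
  have huG : u ∈ G := G.mul_mem hgG (G.inv_mem hg'G)
  refine ⟨u, huG, ?_⟩
  set d : E → R := c - (u : R) • c' with hd
  have hdC : d ∈ C := C.sub_mem hcC (C.smul_mem _ hc'.1)
  have hde : d e = 0 := by
    have h1 : ((u : Rˣ) : R) * c' e = ((g : Rˣ) : R) := by
      rw [hg', ← Units.val_mul, hu, inv_mul_cancel_right]
    simp [hd, hg, h1]
  have hsub : chainSupport d ⊆ chainSupport c := by
    intro x hx
    by_contra hxc
    have hcx : c x = 0 := not_not.mp hxc
    have hc'x : c' x = 0 := by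
      by_contra h
      exact hxc (hsupp ▸ (h : x ∈ chainSupport c'))
    exact hx (by simp [hd, hcx, hc'x])
  have hssub : d ≠ 0 → chainSupport d ⊂ chainSupport c := by
    intro _
    exact ⟨hsub, fun h => (h he) hde⟩
  have hd0 : d = 0 := by
    by_contra h
    exact hcmin d hdC h (hssub h)
  funext x
  have : c x - (u : R) * c' x = 0 := by
    have := congrFun hd0 x
    simpa [hd] using this
  exact sub_eq_zero.mp this
end

section
/- Let P = (R, G) be a skew partial field, E a finite set, and C a P-chain group on E. Then there exists a matroid M on ground set E such that the cocircuits of M (that is, the circuits of the dual matroid M*) are exactly the sets ‖c‖ for elementary chains c ∈ C. -/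
open Matrix Matroid

section Aux

variable {R E : Type*} [Ring R] [Fintype E]

lemma exists_elem_subset (C : Submodule R (E → R)) :
    ∀ n : ℕ, ∀ c ∈ C, c ≠ 0 → (chainSupport c).ncard ≤ n →
      ∃ d, IsElementary (C : Set (E → R)) d ∧ chainSupport d ⊆ chainSupport c := by
  intro n
  induction n with
  | zero =>
    intro c hc hne hcard
    exfalso
    obtain ⟨e, he⟩ : ∃ e, c e ≠ 0 := by
      by_contra h
      push_neg at h
      exact hne (funext h)
    have hpos := (Set.ncard_pos (chainSupport c).toFinite).mpr ⟨e, he⟩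
    omega
  | succ n ih =>
    intro c hc hne hcard
    by_cases hel : IsElementary (C : Set (E → R)) c
    · exact ⟨c, hel, subset_rfl⟩
    · have h : ∃ c' ∈ C, c' ≠ (0 : E → R) ∧ chainSupport c' ⊂ chainSupport c := by
        by_contra h
        push_neg at h
        exact hel ⟨hc, hne, fun c' h1 h2 => h c' h1 h2⟩
      obtain ⟨c', hc'C, hc'ne, hss⟩ := h
      have hlt : (chainSupport c').ncard < (chainSupport c).ncard :=
        Set.ncard_lt_ncard hss (chainSupport c).toFinite
      obtain ⟨d, hd, hsub⟩ := ih c' hc'C hc'ne (by omega)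
      exact ⟨d, hd, hsub.trans hss.subset⟩

lemma exists_elem_subset' (C : Submodule R (E → R)) {c : E → R} (hc : c ∈ C) (hne : c ≠ 0) :
    ∃ d, IsElementary (C : Set (E → R)) d ∧ chainSupport d ⊆ chainSupport c :=
  exists_elem_subset C (chainSupport c).ncard c hc hne le_rfl

lemma elimination {G : Subgroup Rˣ} {C : Submodule R (E → R)} (hC : IsPChainGroup G C)
    {c₁ c₂ : E → R} (h₁ : IsElementary (C : Set (E → R)) c₁)
    (h₂ : IsElementary (C : Set (E → R)) c₂)
    (hne : chainSupport c₁ ≠ chainSupport c₂) {e : E} (he₁ : c₁ e ≠ 0) (he₂ : c₂ e ≠ 0) :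
    ∃ d, IsElementary (C : Set (E → R)) d ∧
      chainSupport d ⊆ (chainSupport c₁ ∪ chainSupport c₂) \ {e} := by
  obtain ⟨r, c', hc'C, hprim, heq⟩ := hC c₂ h₂
  have happ : ∀ x, c₂ x = r * c' x := fun x => by rw [heq]; rfl
  have hsupp : ∀ x, c₂ x ≠ 0 ↔ c' x ≠ 0 := by
    intro x
    constructor
    · intro h hx; exact h (by rw [happ, hx, mul_zero])
    · intro h hx
      rcases hprim x with h0 | ⟨g, _, hg⟩
      · exact h h0
      · have hr : r = 0 := by
          have h0 : r * ((g : Rˣ) : R) = 0 := by rw [← hg, ← happ]; exact hx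
          exact (Units.mul_left_eq_zero g).mp h0
        apply h₂.2.1
        funext y
        rw [happ, hr, zero_mul]; rfl
  have he' : c' e ≠ 0 := (hsupp e).mp he₂
  obtain ⟨g, -, hg⟩ := (hprim e).resolve_left he'
  set s : R := c₁ e * ((g⁻¹ : Rˣ) : R) with hs
  have hsg : s * c' e = c₁ e := by
    rw [hg, hs, mul_assoc, Units.inv_mul, mul_one]
  set d₀ : E → R := c₁ - s • c' with hd₀
  have hd₀C : d₀ ∈ C := C.sub_mem h₁.1 (C.smul_mem s hc'C)
  have hd₀app : ∀ x, d₀ x = c₁ x - s * c' x := fun x => rfl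
  have hd₀e : d₀ e = 0 := by rw [hd₀app, hsg, sub_self]
  have hd₀ne : d₀ ≠ 0 := by
    intro h0
    apply hne
    have hc₁ : ∀ x, c₁ x = s * c' x := by
      intro x
      have hx := congrFun h0 x
      rw [hd₀app] at hx
      exact sub_eq_zero.mp hx
    have hsne : s ≠ 0 := by
      intro hs0
      apply he₁
      rw [← hsg, hs0, zero_mul]
    ext x
    simp only [chainSupport, Set.mem_setOf_eq]
    rw [hsupp x, hc₁ x]
    constructor
    · intro h h0; exact h (by rw [h0, mul_zero])
    · intro h h0
      rcases hprim x with hx0 | ⟨u, _, hu⟩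
      · exact h hx0
      · rw [hu] at h0
        exact hsne ((Units.mul_left_eq_zero u).mp h0)
  obtain ⟨d, hd, hsub⟩ := exists_elem_subset' C hd₀C hd₀ne
  refine ⟨d, hd, hsub.trans ?_⟩
  intro x hx
  simp only [chainSupport, Set.mem_setOf_eq] at hx
  constructor
  · by_contra hcon
    simp only [Set.mem_union, chainSupport, Set.mem_setOf_eq] at hcon
    push_neg at hcon
    have h1 : c₁ x = 0 := hcon.1
    have h2 : c' x = 0 := by
      by_contra h'
      exact (hsupp x).mpr h' hcon.2
    exact hx (by rw [hd₀app, h1, h2, mul_zero, sub_zero])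
  · intro hxe
    simp only [Set.mem_singleton_iff] at hxe
    subst hxe
    exact hx hd₀e

end Aux

section Aux2

variable {R E : Type*} [Ring R] [Fintype E]

/-- Independence predicate: contains no support of an elementary chain. -/
def ChIndep (C : Submodule R (E → R)) (I : Set E) : Prop :=
  ∀ c, IsElementary (C : Set (E → R)) c → ¬ chainSupport c ⊆ I

lemma aug {G : Subgroup Rˣ} {C : Submodule R (E → R)} (hC : IsPChainGroup G C) :
    ∀ n : ℕ, ∀ I J : Set E, (I \ J).ncard = n → ChIndep C I → ChIndep C J →
      I.ncard < J.ncard → ∃ e ∈ J, e ∉ I ∧ ChIndep C (insert e I) := by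
  intro n
  induction n using Nat.strong_induction_on with
  | _ n ih =>
  intro I J hn hI hJ hcard
  by_cases hdone : ∃ f ∈ J, f ∉ I ∧ ChIndep C (insert f I)
  · exact hdone
  push_neg at hdone
  obtain ⟨f, hfJ, hfI⟩ : ∃ f, f ∈ J ∧ f ∉ I := by
    by_contra h; push_neg at h
    exact absurd (Set.ncard_le_ncard (fun x hx => h x hx) I.toFinite) (by omega)
  have hfdep : ¬ ChIndep C (insert f I) := hdone f hfJ hfI
  obtain ⟨cf, hcf, hcfsub⟩ :
      ∃ c, IsElementary (C : Set (E → R)) c ∧ chainSupport c ⊆ insert f I := by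
    unfold ChIndep at hfdep; push_neg at hfdep; exact hfdep
  have hfcf : f ∈ chainSupport cf := by
    by_contra h
    exact hI cf hcf (fun x hx => ((hcfsub hx).resolve_left (by rintro rfl; exact h hx)))
  obtain ⟨e, hecf, heJ⟩ : ∃ e, e ∈ chainSupport cf ∧ e ∉ J := by
    by_contra h; push_neg at h
    exact hJ cf hcf h
  have hef : e ≠ f := fun h => heJ (h ▸ hfJ)
  have heI : e ∈ I := (hcfsub hecf).resolve_left hef
  set I' : Set E := insert f (I \ {e}) with hI'def
  have heI' : e ∉ I' := by
    intro h
    rcases h with h | h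
    · exact hef h
    · exact h.2 rfl
  have hfI'' : f ∈ I' := Set.mem_insert _ _
  have hI'indep : ChIndep C I' := by
    intro c hc hsub
    have hfc : f ∈ chainSupport c := by
      by_contra h
      apply hI c hc
      intro x hx
      have := (hsub hx).resolve_left (by rintro rfl; exact h hx)
      exact this.1
    have hec : e ∉ chainSupport c := fun h => heI' (hsub h)
    have hnesupp : chainSupport c ≠ chainSupport cf := fun h => hec (h ▸ hecf)
    obtain ⟨d, hd, hdsub⟩ := elimination hC hc hcf hnesupp hfc hfcf
    apply hI d hd
    intro x hx
    obtain ⟨hx1, hx2⟩ := hdsub hx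
    have hxf : x ≠ f := hx2
    rcases hx1 with h | h
    · exact (((hsub h).resolve_left hxf)).1
    · exact (hcfsub h).resolve_left hxf
  have hfne : f ∉ I \ ({e} : Set E) := fun h => hfI h.1
  have hI'card : I'.ncard = I.ncard := by
    rw [hI'def, Set.ncard_insert_of_notMem hfne (I \ {e}).toFinite,
      Set.ncard_diff_singleton_add_one heI I.toFinite]
  have hI'J : (I' \ J).ncard < n := by
    have h1 : I' \ J = (I \ J) \ {e} := by
      ext x
      simp only [hI'def, Set.mem_diff, Set.mem_insert_iff, Set.mem_singleton_iff]
      constructor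
      · rintro ⟨h | h, hxJ⟩
        · exact absurd (h ▸ hfJ) hxJ
        · exact ⟨⟨h.1, hxJ⟩, h.2⟩
      · rintro ⟨⟨hxI, hxJ⟩, hxe⟩
        exact ⟨Or.inr ⟨hxI, hxe⟩, hxJ⟩
    rw [h1, ← hn]
    exact Set.ncard_diff_singleton_lt_of_mem ⟨heI, heJ⟩ (I \ J).toFinite
  obtain ⟨g, hgJ, hgI', hgind⟩ :=
    ih _ hI'J I' J rfl hI'indep hJ (by rw [hI'card]; exact hcard)
  have hge : g ≠ e := fun h => heJ (h ▸ hgJ)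
  have hgI : g ∉ I := fun h => hgI' (Or.inr ⟨h, hge⟩)
  have hgf : g ≠ f := fun h => hgI' (h ▸ hfI'')
  refine ⟨g, hgJ, hgI, ?_⟩
  intro c hc hsub
  have hgc : g ∈ chainSupport c := by
    by_contra h
    exact hI c hc (fun x hx => ((hsub hx).resolve_left (by rintro rfl; exact h hx)))
  have hec : e ∈ chainSupport c := by
    by_contra h
    apply hgind c hc
    intro x hx
    rcases hsub hx with h1 | h1
    · exact Or.inl h1
    · exact Or.inr (Or.inr ⟨h1, by rintro rfl; exact h hx⟩)
  have hnesupp : chainSupport c ≠ chainSupport cf := by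
    intro h
    have hfc : f ∈ chainSupport c := h ▸ hfcf
    rcases hsub hfc with h1 | h1
    · exact hgf h1.symm
    · exact hfI h1
  obtain ⟨d, hd, hdsub⟩ := elimination hC hc hcf hnesupp hec hecf
  apply hgind d hd
  intro x hx
  obtain ⟨hx1, hx2⟩ := hdsub hx
  have hxe : x ≠ e := hx2
  rcases hx1 with h | h
  · rcases hsub h with h1 | h1
    · exact Or.inl h1
    · exact Or.inr (Or.inr ⟨h1, hxe⟩)
  · rcases hcfsub h with h1 | h1
    · exact Or.inr (Or.inl h1)
    · exact Or.inr (Or.inr ⟨h1, hxe⟩)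

end Aux2

/-- let `P = (R, G)` be a skew partial field, `E` a finite set, and `C` a
`P`-chain group on `E`.  Then there is a matroid on ground set `E` whose cocircuits are
exactly the supports of the elementary chains of `C`. -/
theorem statement4 {R E : Type*} [Ring R] [Fintype E]
    (G : Subgroup Rˣ) (hG : (-1 : Rˣ) ∈ G)
    (C : Submodule R (E → R)) (hC : IsPChainGroup G C) :
    ∃ M : Matroid E, IsMatroidOf M (C : Set (E → R)) := by
  classical
  set N : Matroid E := (IndepMatroid.ofFinite (Set.finite_univ (α := E))
    (ChIndep C)
    (by
      intro c hc hsub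
      apply hc.2.1
      funext x
      by_contra hx
      exact Set.notMem_empty x (hsub hx))
    (fun I J hJ hIJ => fun c hc hsub => hJ c hc (hsub.trans hIJ))
    (fun I J hI hJ h => aug hC _ I J rfl hI hJ h)
    (fun I _ => Set.subset_univ I)).matroid with hN
  have hNind : ∀ Y : Set E, N.Indep Y ↔ ChIndep C Y := by
    intro Y
    rw [hN, IndepMatroid.matroid_indep_iff]
    exact Iff.rfl
  refine ⟨N✶, ?_, ?_⟩
  · rw [Matroid.dual_ground, hN]
    rfl
  · intro X
    unfold _root_.IsCocircuit _root_.IsCircuit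
    rw [Matroid.dual_dual]
    constructor
    · rintro ⟨hdep, hmin⟩
      rw [hNind] at hdep
      unfold ChIndep at hdep
      push_neg at hdep
      obtain ⟨c, hc, hsub⟩ := hdep
      refine ⟨c, hc, ?_⟩
      by_contra hne
      have hss : chainSupport c ⊂ X := ⟨hsub, fun h => hne (subset_antisymm hsub h)⟩
      have := hmin _ hss
      rw [hNind] at this
      exact this c hc subset_rfl
    · rintro ⟨c, hc, rfl⟩
      constructor
      · rw [hNind]
        intro h
        exact h c hc subset_rfl
      · intro Y hY
        rw [hNind]
        intro c' hc' hsub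
        exact hc.2.2 c' hc'.1 hc'.2.1 (ssubset_of_subset_of_ssubset hsub hY)
end

section
/- Let P = (R, G) be a skew partial field, C a P-chain group on a finite set E, and B a basis of the matroid M(C). Suppose that for each e ∈ B, a^e ∈ C is a G-primitive chain whose support ‖a^e‖ is the B-fundamental cocircuit of M(C) containing e. Then the set C_B := {a^e : e ∈ B} generates C as a left R-module (every c ∈ C can be written c = Σ_{e∈B} p_e·a^e with p_e ∈ R), and no proper subset of C_B generates C. -/
open Matrix Matroid

private lemma exists_elementary_subset' {R E : Type*} [Ring R] [Fintype E]
    (C : Submodule R (E → R)) :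
    ∀ c ∈ C, c ≠ 0 → ∃ d, IsElementary (C : Set (E → R)) d ∧
      chainSupport d ⊆ chainSupport c := by
  have key : ∀ n : ℕ, ∀ c ∈ C, c ≠ 0 → (chainSupport c).ncard ≤ n →
      ∃ d, IsElementary (C : Set (E → R)) d ∧ chainSupport d ⊆ chainSupport c := by
    intro n
    induction n with
    | zero =>
      intro c hc hne hcard
      exfalso
      apply hne
      funext e
      by_contra he
      have hmem : e ∈ chainSupport c := he
      have hpos := (Set.ncard_pos (Set.toFinite _)).mpr ⟨e, hmem⟩
      omega
    | succ n ih =>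
      intro c hc hne hcard
      by_cases h : IsElementary (C : Set (E → R)) c
      · exact ⟨c, h, subset_rfl⟩
      · rw [IsElementary] at h
        push_neg at h
        obtain ⟨c', hc', hne', hss⟩ := h hc hne
        have hlt : (chainSupport c').ncard < (chainSupport c).ncard :=
          Set.ncard_lt_ncard hss (Set.toFinite _)
        obtain ⟨d, hd, hsub⟩ := ih c' hc' hne' (by omega)
        exact ⟨d, hd, hsub.trans hss.subset⟩
  intro c hc hne
  exact key (chainSupport c).ncard c hc hne le_rfl

/-- let `P = (R, G)` be a skew partial field, `C` a `P`-chain group on a finite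
set `E` with matroid `M = M(C)`, `B` a basis of `M`, and for each `e ∈ B` let `a e` be a
`G`-primitive chain of `C` whose support is the `B`-fundamental cocircuit of `M` containing
`e` (the unique cocircuit contained in `(E ∖ B) ∪ {e}` and containing `e`).  Then
`C_B = {a e : e ∈ B}` generates `C`, and no proper subset of `C_B` generates `C`. -/
theorem statement7 {R E : Type*} [Ring R] [Fintype E]
    (G : Subgroup Rˣ) (hG : (-1 : Rˣ) ∈ G)
    (C : Submodule R (E → R)) (hC : IsPChainGroup G C)
    (M : Matroid E) (hM : IsMatroidOf M (C : Set (E → R)))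
    (B : Set E) (hB : M.IsBase B)
    (a : E → (E → R))
    (ha : ∀ e ∈ B, a e ∈ C ∧ IsPrimitive G (a e) ∧
      _root_.IsCocircuit M (chainSupport (a e)) ∧ e ∈ chainSupport (a e) ∧
      chainSupport (a e) ⊆ Bᶜ ∪ {e}) :
    Submodule.span R (a '' B) = C ∧
      ∀ S ⊂ a '' B, Submodule.span R S ≠ C := by
  classical
  have hMground : M.E = Set.univ := hM.1
  have hBcompl : M✶.IsBase Bᶜ := by
    have h := hB.compl_isBase_dual
    rwa [hMground, ← Set.compl_eq_univ_diff] at h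
  have hvanish : ∀ c ∈ C, (∀ f ∈ B, c f = 0) → c = 0 := by
    intro c hc h0
    by_contra hne
    obtain ⟨d, hd, hsub⟩ := exists_elementary_subset' C c hc hne
    have hX : _root_.IsCocircuit M (chainSupport d) := (hM.2 _).mpr ⟨d, hd, rfl⟩
    have hsubB : chainSupport d ⊆ Bᶜ := fun x hx hxB => hsub hx (h0 x hxB)
    exact hX.1 ((hBcompl.indep).subset hsubB)
  have ha' : ∀ e, ∃ g : Rˣ, e ∈ B → a e e = (g : R) := by
    intro e
    by_cases he : e ∈ B
    · obtain ⟨_, hprim, _, hsupp, _⟩ := ha e he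
      rcases hprim e with h0 | ⟨g, _, hge⟩
      · exact absurd h0 hsupp
      · exact ⟨g, fun _ => hge⟩
    · exact ⟨1, fun h => absurd h he⟩
  choose u hu using ha'
  have hoff : ∀ e ∈ B, ∀ f ∈ B, e ≠ f → a e f = 0 := by
    intro e he f hf hne
    by_contra h
    have hfmem : f ∈ chainSupport (a e) := h
    rcases (ha e he).2.2.2.2 hfmem with h1 | h1
    · exact h1 hf
    · exact hne (Set.mem_singleton_iff.mp h1).symm
  have hspan_le : Submodule.span R (a '' B) ≤ C := by
    rw [Submodule.span_le]
    rintro _ ⟨e, he, rfl⟩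
    exact (ha e he).1
  have hBfin : B.Finite := Set.toFinite B
  have hle : (C : Set (E → R)) ⊆ (Submodule.span R (a '' B) : Set (E → R)) := by
    intro c hc
    set s : E → R := fun e => c e * ((u e)⁻¹ : Rˣ) with hs
    have hc'B : ∀ f ∈ B, (c - ∑ e ∈ hBfin.toFinset, s e • a e) f = 0 := by
      intro f hf
      have hfBf : f ∈ hBfin.toFinset := hBfin.mem_toFinset.mpr hf
      have hsum : (∑ e ∈ hBfin.toFinset, s e • a e) f = c f := by
        rw [Finset.sum_apply]
        rw [Finset.sum_eq_single f]
        · simp only [Pi.smul_apply, smul_eq_mul, hs]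
          rw [hu f hf, mul_assoc, Units.inv_mul, mul_one]
        · intro e heBf hne
          have heB := hBfin.mem_toFinset.mp heBf
          simp [hoff e heB f hf hne]
        · exact fun h => absurd hfBf h
      rw [Pi.sub_apply, hsum, sub_self]
    have hc'C : (c - ∑ e ∈ hBfin.toFinset, s e • a e) ∈ C := by
      apply Submodule.sub_mem _ hc
      exact Submodule.sum_mem _ fun e heBf =>
        Submodule.smul_mem _ _ (ha e (hBfin.mem_toFinset.mp heBf)).1
    have hzero := hvanish _ hc'C hc'B
    have hc_eq : c = ∑ e ∈ hBfin.toFinset, s e • a e := by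
      rwa [sub_eq_zero] at hzero
    rw [SetLike.mem_coe, hc_eq]
    exact Submodule.sum_mem _ fun e heBf =>
      Submodule.smul_mem _ _ (Submodule.subset_span ⟨e, hBfin.mem_toFinset.mp heBf, rfl⟩)
  refine ⟨le_antisymm hspan_le (fun c hc => hle hc), ?_⟩
  intro S hS hSC
  obtain ⟨x, hxAB, hxS⟩ := Set.exists_of_ssubset hS
  obtain ⟨f, hf, rfl⟩ := hxAB
  have hker : Submodule.span R S ≤
      LinearMap.ker (LinearMap.proj (R := R) (φ := fun _ : E => R) f) := by
    rw [Submodule.span_le]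
    intro y hy
    obtain ⟨e, he, rfl⟩ := hS.subset hy
    have hne : e ≠ f := fun h => hxS (h ▸ hy)
    simp [LinearMap.mem_ker, hoff e he f hf hne]
  have hzero : a f f = 0 := by
    have hmem : a f ∈ Submodule.span R S := hSC ▸ (ha f hf).1
    simpa using hker hmem
  exact (ha f hf).2.2.2.1 hzero
end

section
/- Let M be a matroid on a finite set E with set of cocircuits 𝒞*, let P = (R, G) be a skew partial field, and for each X ∈ 𝒞* let a^X ∈ R^E be a G-primitive chain with ‖a^X‖ = X. Let C := {Σ_{X∈𝒞*} r_X·a^X : r_X ∈ R} be the left R-submodule of R^E generated by the chains a^X. Then C is a P-chain group with M(C) = M if and only if for every modular triple of cocircuits X, X', X'' ∈ 𝒞* there exist p, p', p'' ∈ G with p·a^X + p'·a^{X'} + p''·a^{X''} = 0. -/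
open Matrix Matroid

/-- `X, X', X''` is a modular triple of cocircuits of `M`: they are distinct cocircuits and
the contraction `M / S`, where `S = E(M) ∖ (X ∪ X' ∪ X'')`, has rank `2`. -/
def ModularTriple {α : Type*} (M : Matroid α) (X X' X'' : Set α) : Prop :=
  _root_.IsCocircuit M X ∧ _root_.IsCocircuit M X' ∧ _root_.IsCocircuit M X'' ∧
    X ≠ X' ∧ X ≠ X'' ∧ X' ≠ X'' ∧
    RankEq (matroidContract M (M.E \ (X ∪ X' ∪ X''))) 2

section Aux

open Set

set_option linter.unusedSectionVars false


variable {α : Type*} [Fintype α] {Q : Matroid α} {D X X₁ X₂ B : Set α} {e x : α}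

private lemma exists_circuit_aux (n : ℕ) :
    ∀ D : Set α, D.ncard ≤ n → ¬ Q.Indep D → ∃ X, X ⊆ D ∧ _root_.IsCircuit Q X := by
  induction n with
  | zero =>
    intro D hD hdep
    rw [Nat.le_zero, Set.ncard_eq_zero D.toFinite] at hD
    subst hD; exact absurd Q.empty_indep hdep
  | succ n ih =>
    intro D hD hdep
    by_cases h : ∀ Y, Y ⊂ D → Q.Indep Y
    · exact ⟨D, Subset.rfl, hdep, h⟩
    · push_neg at h
      obtain ⟨Y, hYD, hY⟩ := h
      obtain ⟨X, hXY, hX⟩ := ih Y (by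
        have := Set.ncard_lt_ncard hYD D.toFinite; omega) hY
      exact ⟨X, hXY.trans hYD.subset, hX⟩

lemma exists_circuit_of_dep (hdep : ¬ Q.Indep D) : ∃ X, X ⊆ D ∧ _root_.IsCircuit Q X :=
  exists_circuit_aux D.ncard D le_rfl hdep

lemma IsCircuit.eq_of_subset (h₁ : _root_.IsCircuit Q X₁) (h₂ : _root_.IsCircuit Q X₂) (h : X₁ ⊆ X₂) :
    X₁ = X₂ := by
  by_contra hne
  exact h₁.1 (h₂.2 X₁ (ssubset_of_subset_of_ne h hne))

lemma IsCircuit.nonempty (h : _root_.IsCircuit Q X) : X.Nonempty := by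
  rw [Set.nonempty_iff_ne_empty]
  rintro rfl; exact h.1 Q.empty_indep

lemma IsCircuit.diff_singleton_indep (h : _root_.IsCircuit Q X) (hx : x ∈ X) : Q.Indep (X \ {x}) :=
  h.2 _ (Set.sdiff_singleton_ssubset.mpr hx)

lemma IsCircuit.mem_closure (hQE : Q.E = univ) (h : _root_.IsCircuit Q X) (hx : x ∈ X) :
    x ∈ Q.closure (X \ {x}) := by
  have hI := h.diff_singleton_indep hx
  have hdep : Q.Dep (insert x (X \ {x})) := by
    rw [Set.insert_diff_singleton, Set.insert_eq_of_mem hx]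
    exact ⟨h.1, by rw [hQE]; exact subset_univ _⟩
  exact (hI.insert_dep_iff.mp hdep).1

/-- Uniqueness of the fundamental circuit. -/
lemma fundCircuit_unique (hQE : Q.E = univ) (hB : Q.Indep B)
    (h₁ : _root_.IsCircuit Q X₁) (h₂ : _root_.IsCircuit Q X₂)
    (hX₁ : X₁ ⊆ insert e B) (hX₂ : X₂ ⊆ insert e B) : X₁ = X₂ := by
  have he₁ : e ∈ X₁ := by
    by_contra he
    exact h₁.1 (hB.subset (fun y hy => ((hX₁ hy).resolve_left (by rintro rfl; exact he hy))))
  have he₂ : e ∈ X₂ := by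
    by_contra he
    exact h₂.1 (hB.subset (fun y hy => ((hX₂ hy).resolve_left (by rintro rfl; exact he hy))))
  -- key : any x in X₁ \ X₂ yields a contradiction, and symmetrically
  have key : ∀ Y₁ Y₂, _root_.IsCircuit Q Y₁ → _root_.IsCircuit Q Y₂ → Y₁ ⊆ insert e B → Y₂ ⊆ insert e B →
      e ∈ Y₂ → ∀ x ∈ Y₁, x ∉ Y₂ → False := by
    intro Y₁ Y₂ h₁ h₂ hY₁ hY₂ he₂ x hx hxn
    have hxe : x ≠ e := by rintro rfl; exact hxn he₂
    have hxB : x ∈ B := (hY₁ hx).resolve_left hxe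
    have hcl₁ : x ∈ Q.closure (Y₁ \ {x}) := h₁.mem_closure hQE hx
    have hecl : e ∈ Q.closure (B \ {x}) := by
      refine mem_of_mem_of_subset (h₂.mem_closure hQE he₂) (Q.closure_subset_closure ?_)
      intro y hy
      exact ⟨(hY₂ hy.1).resolve_left hy.2, by rintro rfl; exact hxn hy.1⟩
    have hsub : Y₁ \ {x} ⊆ insert e (B \ {x}) := by
      intro y hy
      rcases hY₁ hy.1 with rfl | hyB
      · exact mem_insert _ _
      · exact mem_insert_of_mem _ ⟨hyB, hy.2⟩
    have : x ∈ Q.closure (B \ {x}) := by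
      have h1 : Q.closure (Y₁ \ {x}) ⊆ Q.closure (insert e (B \ {x})) :=
        Q.closure_subset_closure hsub
      rw [closure_insert_eq_of_mem_closure hecl] at h1
      exact h1 hcl₁
    exact hB.notMem_closure_diff_of_mem hxB this
  apply Set.eq_of_subset_of_subset
  · intro x hx; by_contra hxn; exact key X₁ X₂ h₁ h₂ hX₁ hX₂ he₂ x hx hxn
  · intro x hx; by_contra hxn; exact key X₂ X₁ h₂ h₁ hX₂ hX₁ he₁ x hx hxn

/-! ### Hyperplanes -/

/-- A hyperplane, phrased through closures. -/
def Hyp {α : Type*} (M : Matroid α) (H : Set α) : Prop :=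
  M.closure H = H ∧ ¬ M.Spanning H ∧ ∀ x, x ∉ H → M.Spanning (insert x H)

section Hyp

variable {α : Type*} [Fintype α] {M : Matroid α} {H H₁ H₂ X J K B : Set α} {x w : α}
  (hME : M.E = univ)

include hME

lemma subsetE (S : Set α) : S ⊆ M.E := by rw [hME]; exact subset_univ S

lemma compl_compl_eq (S : Set α) : univ \ (univ \ S) = S :=
  Set.diff_diff_cancel_left (subset_univ S)

lemma IsCocircuit.compl_hyp (h : _root_.IsCocircuit M X) : Hyp M (univ \ X) := by
  obtain ⟨hdep, hmin⟩ := h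
  have hXE : univ \ X = M.E \ X := by rw [hME]
  have hspan : ∀ x ∈ X, M.Spanning (insert x (univ \ X)) := by
    intro x hx
    have hind : M✶.Indep (X \ {x}) :=
      hmin _ (Set.sdiff_singleton_ssubset.mpr hx)
    have hco : M.Coindep (X \ {x}) := coindep_def.mpr hind
    have := (coindep_iff_compl_spanning (hME ▸ subset_univ _)).mp hco
    have hset : M.E \ (X \ {x}) = insert x (univ \ X) := by
      rw [hME]; ext y
      simp only [mem_diff, mem_univ, true_and, mem_insert_iff, mem_singleton_iff]
      by_cases hy : y = x
      · subst hy; simp [hx]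
      · simp [hy]
    rwa [hset] at this
  have hns : ¬ M.Spanning (univ \ X) := by
    intro hsp
    exact hdep ((coindep_iff_compl_spanning (hME ▸ subset_univ _)).mpr (hXE ▸ hsp)).indep
  refine ⟨?_, hns, fun x hxH => hspan x (by simpa using hxH)⟩
  refine Set.Subset.antisymm ?_ (M.subset_closure _ (subsetE hME _))
  intro z hz
  by_contra hzH
  have hx : z ∈ X := by simpa using hzH
  have h1 := hspan z hx
  rw [spanning_iff_closure_eq (subsetE hME _),
    closure_insert_eq_of_mem_closure hz] at h1
  exact hns ((spanning_iff_closure_eq (subsetE hME _)).mpr h1)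

lemma Hyp.compl_cocircuit (h : Hyp M H) : _root_.IsCocircuit M (univ \ H) := by
  obtain ⟨hflat, hns, hspan⟩ := h
  constructor
  · intro hind
    have hco : M.Coindep (univ \ H) := coindep_def.mpr hind
    have := (coindep_iff_compl_spanning (subsetE hME _)).mp hco
    rw [hME, compl_compl_eq hME] at this
    exact hns this
  · intro Y hY
    obtain ⟨x, hx, hxY⟩ := Set.exists_of_ssubset hY
    have hxH : x ∉ H := (Set.mem_diff x).mp hx |>.2
    have hins : insert x H ⊆ univ \ Y := by
      intro y hy
      rcases hy with rfl | hyH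
      · exact ⟨mem_univ _, hxY⟩
      · exact ⟨mem_univ _, fun hyY => ((hY.subset hyY).2 hyH)⟩
    have hsp : M.Spanning (univ \ Y) :=
      (hspan x hxH).superset hins (subsetE hME _)
    have : M.Coindep Y := by
      rw [coindep_iff_compl_spanning (hME ▸ subset_univ _), hME]
      exact hsp
    exact this.indep

lemma Hyp.eq_of_subset (h₁ : Hyp M H₁) (h₂ : Hyp M H₂) (h : H₁ ⊆ H₂) : H₁ = H₂ := by
  by_contra hne
  obtain ⟨x, hx2, hx1⟩ := Set.exists_of_ssubset (ssubset_of_subset_of_ne h hne)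
  exact h₂.2.1 ((h₁.2.2 x hx1).superset (insert_subset hx2 h) (hME ▸ subset_univ _))

lemma hyp_closure (hJ : M.Indep J) (hB : M.IsBase B) (hcard : J.ncard + 1 = B.ncard) :
    Hyp M (M.closure J) := by
  refine ⟨M.closure_closure J, ?_, ?_⟩
  · intro hsp
    rw [spanning_iff_closure_eq (M.closure_subset_ground J), Matroid.closure_closure] at hsp
    have : M.IsBase J := by
      rw [isBase_iff_indep_closure_eq]
      exact ⟨hJ, hsp⟩
    have := this.ncard_eq_ncard_of_isBase hB
    omega
  · intro x hx
    have hxJ : x ∉ J := fun hxJ => hx (M.subset_closure J (hME ▸ subset_univ _) hxJ)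
    have hind : M.Indep (insert x J) := by
      rw [insert_indep_iff]
      exact ⟨hJ, fun _ => ⟨hME ▸ mem_univ x, hx⟩⟩
    obtain ⟨B', hB', hsub⟩ := hind.exists_isBase_superset
    have hcard2 : (insert x J).ncard = B'.ncard := by
      rw [Set.ncard_insert_of_notMem hxJ J.toFinite, hcard,
        hB.ncard_eq_ncard_of_isBase hB']
    have : insert x J = B' :=
      Set.eq_of_subset_of_ncard_le hsub hcard2.ge B'.toFinite
    have hsp : M.Spanning (insert x J) := this ▸ hB'.spanning
    exact hsp.superset (insert_subset_insert (M.subset_closure J (hME ▸ subset_univ _)))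
      (hME ▸ subset_univ _)

/-- Point hyperplane over a corank-2 closed set. -/
lemma hyp_point (hK : M.Indep K) (hB : M.IsBase B) (hcard : K.ncard + 2 = B.ncard)
    (hw : w ∉ M.closure K) : Hyp M (M.closure (insert w K)) := by
  have hwK : w ∉ K := fun h => hw (M.subset_closure K (hME ▸ subset_univ _) h)
  have hind : M.Indep (insert w K) := by
    rw [insert_indep_iff]
    exact ⟨hK, fun _ => ⟨hME ▸ mem_univ w, hw⟩⟩
  exact hyp_closure hME hind hB
    (by rw [Set.ncard_insert_of_notMem hwK K.toFinite]; omega)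

end Hyp

/-! ### Cardinality duality -/

section Card

variable {α : Type*} [Fintype α] {M : Matroid α} {B J J' K S X : Set α}

lemma basis_ncard_eq (h : M.IsBasis J X) (h' : M.IsBasis J' X) : J.ncard = J'.ncard :=
  (h.restrict_isBase).ncard_eq_ncard_of_isBase (h'.restrict_isBase)

lemma dual_basis_card (hME : M.E = univ) (hB : M.IsBase B) (hK : M.IsBasis K S)
    (hJ : M✶.IsBasis J (univ \ S)) : J.ncard + B.ncard = (univ \ S).ncard + K.ncard := by
  obtain ⟨B₀, hB₀, hKeq⟩ := hK.exists_isBase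
  have h2 : M.IsBasis (B₀ ∩ S) S := hKeq ▸ hK
  have h3 := hB₀.compl_inter_isBasis_of_inter_isBasis h2
  rw [hME] at h3
  have h4 : (univ \ B₀) ∩ (univ \ S) = univ \ (B₀ ∪ S) := by
    rw [Set.diff_inter_diff]
  rw [h4] at h3
  have hJcard : J.ncard = (univ \ (B₀ ∪ S)).ncard := basis_ncard_eq hJ h3
  have e1 : (univ \ (B₀ ∪ S)).ncard + (B₀ ∪ S).ncard = (univ : Set α).ncard :=
    Set.ncard_diff_add_ncard_of_subset (subset_univ _) (toFinite _)
  have e2 : (univ \ S).ncard + S.ncard = (univ : Set α).ncard :=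
    Set.ncard_diff_add_ncard_of_subset (subset_univ _) (toFinite _)
  have e3 : (B₀ ∪ S).ncard + (B₀ ∩ S).ncard = B₀.ncard + S.ncard :=
    Set.ncard_union_add_ncard_inter _ _ (toFinite _) (toFinite _)
  have e4 : B₀.ncard = B.ncard := hB₀.ncard_eq_ncard_of_isBase hB
  have e5 : (B₀ ∩ S).ncard = K.ncard := by rw [← hKeq]
  omega

end Card

section Rank2

variable {α : Type*} [Fintype α] {M : Matroid α} {B K : Set α} {T : Set α}

lemma matroidContract_eq (hME : M.E = univ) (T : Set α) :
    matroidContract M (univ \ T) = (M✶ ↾ T)✶ := by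
  rw [matroidContract, dual_ground, hME, compl_compl_eq hME]

lemma rankEq2_of_basis (hME : M.E = univ) (hB : M.IsBase B) (hK : M.IsBasis K (univ \ T))
    (hcard : K.ncard + 2 = B.ncard) : RankEq (matroidContract M (univ \ T)) 2 := by
  rw [matroidContract_eq hME]
  obtain ⟨J, hJ⟩ := M✶.exists_isBasis T (by rw [dual_ground, hME]; exact subset_univ _)
  have hJT : M✶.IsBasis J (univ \ (univ \ T)) := by rw [compl_compl_eq hME]; exact hJ
  have hcard2 := dual_basis_card hME hB hK hJT
  rw [compl_compl_eq hME] at hcard2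
  have hQJ : (M✶ ↾ T).IsBase J := hJ.restrict_isBase
  refine ⟨T \ J, ?_, ?_⟩
  · have hsub : T \ J ⊆ (M✶ ↾ T).E := by rw [restrict_ground_eq]; exact diff_subset
    rw [dual_isBase_iff hsub, restrict_ground_eq]
    rwa [Set.diff_diff_cancel_left hJ.subset]
  · have h1 : (T \ J).ncard + J.ncard = T.ncard :=
      Set.ncard_diff_add_ncard_of_subset hJ.subset (toFinite _)
    omega

lemma basis_of_rankEq2 (hME : M.E = univ) (hB : M.IsBase B)
    (h : RankEq (matroidContract M (univ \ T)) 2) :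
    ∃ K, M.IsBasis K (univ \ T) ∧ K.ncard + 2 = B.ncard := by
  rw [matroidContract_eq hME] at h
  obtain ⟨B₂, hB₂, hc⟩ := h
  have hB₂T : B₂ ⊆ T := by simpa using hB₂.subset_ground
  rw [dual_isBase_iff hB₂T] at hB₂
  rw [show (M✶ ↾ T).E = T from rfl] at hB₂
  have hJ : M✶.IsBasis (T \ B₂) T := by
    rw [← isBase_restrict_iff (by rw [dual_ground, hME]; exact subset_univ _)]
    exact hB₂
  obtain ⟨K, hK⟩ := M.exists_isBasis (univ \ T) (by rw [hME]; exact subset_univ _)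
  have hcard2 := dual_basis_card hME hB hK (by rw [compl_compl_eq hME]; exact hJ)
  rw [compl_compl_eq hME] at hcard2
  have h1 : (T \ B₂).ncard + B₂.ncard = T.ncard :=
    Set.ncard_diff_add_ncard_of_subset hB₂T (toFinite _)
  exact ⟨K, hK, by omega⟩

end Rank2

/-! ### Chains -/

section Chains

variable {R E : Type*} [Zero R] [Fintype E] {C : Set (E → R)} {c : E → R}

lemma ne_zero_of_mem_support {e : E} (h : e ∈ chainSupport c) : c e ≠ 0 := h

lemma support_eq_empty_iff : chainSupport c = ∅ ↔ c = 0 := by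
  constructor
  · intro h; funext e
    by_contra he
    exact absurd (h ▸ he : e ∈ (∅ : Set E)) (Set.notMem_empty e)
  · rintro rfl; ext e; simp [chainSupport]

private lemma exists_elementary_aux (n : ℕ) :
    ∀ c : E → R, c ∈ C → c ≠ 0 → (chainSupport c).ncard ≤ n →
      ∃ c₀, IsElementary C c₀ ∧ chainSupport c₀ ⊆ chainSupport c := by
  induction n with
  | zero =>
    intro c hc hne hcard
    rw [Nat.le_zero, Set.ncard_eq_zero (toFinite _), support_eq_empty_iff] at hcard
    exact absurd hcard hne
  | succ n ih =>
    intro c hc hne hcard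
    by_cases h : ∀ c' ∈ C, c' ≠ (0 : E → R) → ¬ (chainSupport c' ⊂ chainSupport c)
    · exact ⟨c, ⟨hc, hne, h⟩, Set.Subset.rfl⟩
    · push_neg at h
      obtain ⟨c', hc', hne', hss⟩ := h
      obtain ⟨c₀, hel, hsub⟩ := ih c' hc' hne' (by
        have := Set.ncard_lt_ncard hss (toFinite _); omega)
      exact ⟨c₀, hel, hsub.trans hss.subset⟩

lemma exists_elementary (hc : c ∈ C) (hne : c ≠ 0) :
    ∃ c₀, IsElementary C c₀ ∧ chainSupport c₀ ⊆ chainSupport c :=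
  exists_elementary_aux (chainSupport c).ncard c hc hne le_rfl

end Chains

/-! ### Points over a corank-2 closed set -/

section Points

variable {α : Type*} [Fintype α] {M : Matroid α} {B K H H' : Set α} {w : α}

lemma hyp_eq_point (hME : M.E = univ) (hK : M.Indep K) (hB : M.IsBase B)
    (hcard : K.ncard + 2 = B.ncard) (hH : Hyp M H) (hFH : M.closure K ⊆ H)
    (hw : w ∈ H \ M.closure K) : H = M.closure (insert w K) := by
  have hp := hyp_point hME hK hB hcard hw.2
  refine (Hyp.eq_of_subset hME hp hH ?_).symm
  have h1 : insert w K ⊆ H :=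
    insert_subset hw.1 ((M.subset_closure K (hME ▸ subset_univ _)).trans hFH)
  calc M.closure (insert w K) ⊆ M.closure H := M.closure_subset_closure h1
    _ = H := hH.1

lemma exists_mem_diff_of_hyp_ne (hME : M.E = univ) (hH : Hyp M H) (hH' : Hyp M H')
    (hFH' : M.closure K ⊆ H') (hne : H ≠ H') : ∃ w, w ∈ H \ M.closure K := by
  by_contra h
  push_neg at h
  have hsub : H ⊆ M.closure K := fun x hx => by
    by_contra hx'; exact (h x) ⟨hx, hx'⟩
  exact hne (Hyp.eq_of_subset hME hH hH' (hsub.trans hFH'))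

lemma inter_subset_of_hyp_ne (hME : M.E = univ) (hK : M.Indep K) (hB : M.IsBase B)
    (hcard : K.ncard + 2 = B.ncard) (hH : Hyp M H) (hH' : Hyp M H')
    (hFH : M.closure K ⊆ H) (hFH' : M.closure K ⊆ H') (hne : H ≠ H') :
    H ∩ H' ⊆ M.closure K := by
  intro z hz
  by_contra hzF
  have e1 := hyp_eq_point hME hK hB hcard hH hFH ⟨hz.1, hzF⟩
  have e2 := hyp_eq_point hME hK hB hcard hH' hFH' ⟨hz.2, hzF⟩
  exact hne (e1.trans e2.symm)

end Points

section Main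

variable {R E : Type*} [Ring R] [Fintype E] {G : Subgroup Rˣ} {M : Matroid E}
  {a : Set E → (E → R)}

lemma prim_unit {c : E → R} (hprim : IsPrimitive G c) {e : E} (he : e ∈ chainSupport c) :
    ∃ g : Rˣ, g ∈ G ∧ c e = ((g : Rˣ) : R) := by
  rcases hprim e with h | ⟨g, hg, hge⟩
  · exact absurd h he
  · exact ⟨g, hg, hge⟩

lemma cocircuit_subset_support {C : Submodule R (E → R)}
    (hMO : IsMatroidOf M (C : Set (E → R))) {c : E → R} (hc : c ∈ C) (hne : c ≠ 0) :
    ∃ Y, _root_.IsCocircuit M Y ∧ Y ⊆ chainSupport c := by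
  obtain ⟨c₀, hel, hsub⟩ := exists_elementary hc hne
  exact ⟨_, (hMO.2 _).mpr ⟨c₀, hel, rfl⟩, hsub⟩

lemma forward_dir (hG : (-1 : Rˣ) ∈ G) (hME : M.E = Set.univ)
    (ha : ∀ X, _root_.IsCocircuit M X → IsPrimitive G (a X) ∧ chainSupport (a X) = X)
    (hMO : IsMatroidOf M ((Submodule.span R (a '' {X | _root_.IsCocircuit M X}) :
      Submodule R (E → R)) : Set (E → R)))
    {X X' X'' : Set E} (hT : ModularTriple M X X' X'') :
    ∃ p ∈ G, ∃ p' ∈ G, ∃ p'' ∈ G,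
      ((p : Rˣ) : R) • a X + ((p' : Rˣ) : R) • a X' + ((p'' : Rˣ) : R) • a X'' = 0 := by
  classical
  obtain ⟨hX, hX', hX'', hne1, hne2, hne3, hrk⟩ := hT
  set C := Submodule.span R (a '' {X | _root_.IsCocircuit M X}) with hC
  have haMem : ∀ {Y : Set E}, _root_.IsCocircuit M Y → a Y ∈ C := fun hY =>
    Submodule.subset_span ⟨_, hY, rfl⟩
  have haU : ∀ {Y : Set E}, _root_.IsCocircuit M Y → ∀ {z : E}, z ∈ Y →
      ∃ g : Rˣ, g ∈ G ∧ a Y z = ((g : Rˣ) : R) := by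
    intro Y hY z hz
    exact prim_unit (ha Y hY).1 (by rw [(ha Y hY).2]; exact hz)
  have haZ : ∀ {Y : Set E}, _root_.IsCocircuit M Y → ∀ {z : E}, z ∉ Y → a Y z = 0 := by
    intro Y hY z hz
    by_contra h
    exact hz ((ha Y hY).2 ▸ h)
  -- the corank-2 flat
  set T := X ∪ X' ∪ X'' with hTdef
  rw [hME] at hrk
  obtain ⟨B, hB⟩ := M.exists_isBase
  obtain ⟨K, hK, hKcard⟩ := basis_of_rankEq2 hME hB hrk
  have hKind := hK.indep
  have hKT : K ⊆ univ \ T := hK.subset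
  -- the three hyperplanes
  have hHX : Hyp M (univ \ X) := IsCocircuit.compl_hyp hME hX
  have hHX' : Hyp M (univ \ X') := IsCocircuit.compl_hyp hME hX'
  have hHX'' : Hyp M (univ \ X'') := IsCocircuit.compl_hyp hME hX''
  have hFsub : ∀ {Y : Set E}, _root_.IsCocircuit M Y → Y ⊆ T → M.closure K ⊆ univ \ Y := by
    intro Y hY hYT
    have h1 : K ⊆ univ \ Y := hKT.trans (Set.diff_subset_diff_right hYT)
    calc M.closure K ⊆ M.closure (univ \ Y) := M.closure_subset_closure h1
      _ = univ \ Y := (IsCocircuit.compl_hyp hME hY).1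
  have hFX : M.closure K ⊆ univ \ X := hFsub hX (subset_union_left.trans subset_union_left)
  have hFX' : M.closure K ⊆ univ \ X' := hFsub hX' (subset_union_right.trans subset_union_left)
  have hFX'' : M.closure K ⊆ univ \ X'' := hFsub hX'' subset_union_right
  have compl_inj : ∀ {S S' : Set E}, univ \ S = univ \ S' → S = S' := by
    intro S S' h
    rw [← compl_compl_eq hME S, h, compl_compl_eq hME]
  have hcne1 : (univ \ X) ≠ univ \ X' := fun h => hne1 (compl_inj h)
  have hcne2 : (univ \ X) ≠ univ \ X'' := fun h => hne2 (compl_inj h)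
  have hcne3 : (univ \ X') ≠ univ \ X'' := fun h => hne3 (compl_inj h)
  -- the element e ∈ (X ∩ X') \ X''
  obtain ⟨e, he⟩ := exists_mem_diff_of_hyp_ne hME hHX'' hHX hFX hcne2.symm
  have hH''e : univ \ X'' = M.closure (insert e K) :=
    hyp_eq_point hME hKind hB hKcard hHX'' hFX'' he
  have heX : e ∈ X := by
    by_contra h
    exact he.2 (inter_subset_of_hyp_ne hME hKind hB hKcard hHX hHX'' hFX hFX'' hcne2
      ⟨⟨mem_univ e, h⟩, he.1⟩)
  have heX' : e ∈ X' := by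
    by_contra h
    exact he.2 (inter_subset_of_hyp_ne hME hKind hB hKcard hHX' hHX'' hFX' hFX'' hcne3
      ⟨⟨mem_univ e, h⟩, he.1⟩)
  have heX'' : e ∉ X'' := he.1.2
  -- the element f ∈ (X ∩ X'') \ X'
  obtain ⟨f, hf⟩ := exists_mem_diff_of_hyp_ne hME hHX' hHX hFX hcne1.symm
  have hH'f : univ \ X' = M.closure (insert f K) :=
    hyp_eq_point hME hKind hB hKcard hHX' hFX' hf
  have hfX : f ∈ X := by
    by_contra h
    exact hf.2 (inter_subset_of_hyp_ne hME hKind hB hKcard hHX hHX' hFX hFX' hcne1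
      ⟨⟨mem_univ f, h⟩, hf.1⟩)
  have hfX'' : f ∈ X'' := by
    by_contra h
    exact hf.2 (inter_subset_of_hyp_ne hME hKind hB hKcard hHX'' hHX' hFX'' hFX' hcne3.symm
      ⟨⟨mem_univ f, h⟩, hf.1⟩)
  have hfX' : f ∉ X' := hf.1.2
  -- the key uniqueness arguments
  have keyE : ∀ {Y : Set E}, _root_.IsCocircuit M Y → Y ⊆ T → e ∉ Y → Y = X'' := by
    intro Y hY hYT heY
    have hHY : Hyp M (univ \ Y) := IsCocircuit.compl_hyp hME hY
    have hsub : M.closure (insert e K) ⊆ univ \ Y := by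
      have h1 : insert e K ⊆ univ \ Y :=
        insert_subset ⟨mem_univ e, heY⟩ (hKT.trans (Set.diff_subset_diff_right hYT))
      calc M.closure (insert e K) ⊆ M.closure (univ \ Y) := M.closure_subset_closure h1
        _ = univ \ Y := hHY.1
    have : univ \ X'' = univ \ Y := Hyp.eq_of_subset hME hHX'' hHY (hH''e ▸ hsub)
    exact (compl_inj this).symm
  have keyF : ∀ {Y : Set E}, _root_.IsCocircuit M Y → Y ⊆ T → f ∉ Y → Y = X' := by
    intro Y hY hYT hfY
    have hHY : Hyp M (univ \ Y) := IsCocircuit.compl_hyp hME hY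
    have hsub : M.closure (insert f K) ⊆ univ \ Y := by
      have h1 : insert f K ⊆ univ \ Y :=
        insert_subset ⟨mem_univ f, hfY⟩ (hKT.trans (Set.diff_subset_diff_right hYT))
      calc M.closure (insert f K) ⊆ M.closure (univ \ Y) := M.closure_subset_closure h1
        _ = univ \ Y := hHY.1
    have : univ \ X' = univ \ Y := Hyp.eq_of_subset hME hHX' hHY (hH'f ▸ hsub)
    exact (compl_inj this).symm
  -- units
  obtain ⟨gX, hgX, hgXe⟩ := haU hX heX
  obtain ⟨gX', hgX', hgX'e⟩ := haU hX' heX'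
  obtain ⟨gXf, hgXf, hgXfe⟩ := haU hX hfX
  obtain ⟨g''f, hg''f, hg''fe⟩ := haU hX'' hfX''
  haveI : Nontrivial R := by
    refine ⟨⟨a X e, 0, ?_⟩⟩
    have he' : e ∈ chainSupport (a X) := by rw [(ha X hX).2]; exact heX
    exact he'
  -- the chain d
  set d : E → R := ((gX⁻¹ : Rˣ) : R) • a X - ((gX'⁻¹ : Rˣ) : R) • a X' with hd
  have hdC : d ∈ C := sub_mem (Submodule.smul_mem _ _ (haMem hX))
    (Submodule.smul_mem _ _ (haMem hX'))
  have hdapp : ∀ z, d z = ((gX⁻¹ : Rˣ) : R) * a X z - ((gX'⁻¹ : Rˣ) : R) * a X' z := by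
    intro z; simp [hd]
  have hde : d e = 0 := by
    rw [hdapp, hgXe, hgX'e]
    simp [← Units.val_mul]
  have hdsupp : chainSupport d ⊆ (X ∪ X') \ {e} := by
    intro z hz
    refine ⟨?_, ?_⟩
    · by_contra h
      rw [mem_union] at h; push_neg at h
      exact hz (by rw [hdapp, haZ hX h.1, haZ hX' h.2]; simp)
    · rintro rfl
      exact hz hde
  have hdne : d ≠ 0 := by
    have hXX' : ¬ X ⊆ X' := fun h => hne1 (IsCircuit.eq_of_subset hX hX' h)
    obtain ⟨x₀, hx₀X, hx₀X'⟩ := Set.not_subset.mp hXX'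
    obtain ⟨g₀, _, hg₀⟩ := haU hX hx₀X
    intro h0
    have : d x₀ = 0 := by rw [h0]; rfl
    rw [hdapp, haZ hX' hx₀X', hg₀, mul_zero, sub_zero, ← Units.val_mul] at this
    exact Units.ne_zero _ this
  -- X'' is inside the support of d
  have hX''sub : X'' ⊆ chainSupport d := by
    obtain ⟨Y, hY, hYsub⟩ := cocircuit_subset_support hMO hdC hdne
    have hYT : Y ⊆ T := hYsub.trans (hdsupp.trans (diff_subset.trans subset_union_left))
    have heY : e ∉ Y := fun hh => (hdsupp (hYsub hh)).2 rfl
    rw [← keyE hY hYT heY]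
    exact hYsub
  -- the unit q and the chain d''
  set q : Rˣ := gX⁻¹ * gXf * g''f⁻¹ with hq
  have hqG : q ∈ G := mul_mem (mul_mem (inv_mem hgX) hgXf) (inv_mem hg''f)
  set d'' : E → R := d - ((q : Rˣ) : R) • a X'' with hd''
  have hd''app : ∀ z, d'' z = d z - ((q : Rˣ) : R) * a X'' z := by intro z; simp [hd'']
  have hd''0 : d'' = 0 := by
    by_contra hne0
    have hd''C : d'' ∈ C := sub_mem hdC (Submodule.smul_mem _ _ (haMem hX''))
    have hd''e : d'' e = 0 := by rw [hd''app, hde, haZ hX'' heX'', mul_zero, sub_zero]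
    have hd''f : d'' f = 0 := by
      rw [hd''app, hdapp, haZ hX' hfX', hgXfe, hg''fe, hq]
      simp [← Units.val_mul, mul_assoc]
    have hsupp : chainSupport d'' ⊆ T \ {e, f} := by
      intro z hz
      constructor
      · by_contra h
        rw [hTdef] at h
        simp only [mem_union, not_or] at h
        exact hz (by rw [hd''app, hdapp, haZ hX h.1.1, haZ hX' h.1.2, haZ hX'' h.2]; simp)
      · rintro (rfl | rfl)
        · exact hz hd''e
        · exact hz hd''f
    obtain ⟨Y, hY, hYsub⟩ := cocircuit_subset_support hMO hd''C hne0
    have hYT : Y ⊆ T := (hYsub.trans hsupp).trans diff_subset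
    have heY : e ∉ Y := fun hh => ((hYsub.trans hsupp) hh).2 (Or.inl rfl)
    have hfY : f ∉ Y := fun hh => ((hYsub.trans hsupp) hh).2 (Or.inr rfl)
    exact hne3 ((keyF hY hYT hfY).symm.trans (keyE hY hYT heY))
  -- conclude
  refine ⟨gX⁻¹, inv_mem hgX, (-1) * gX'⁻¹, mul_mem hG (inv_mem hgX'),
    (-1) * q, mul_mem hG hqG, ?_⟩
  have hv1 : (((-1 : Rˣ) * gX'⁻¹ : Rˣ) : R) = -((gX'⁻¹ : Rˣ) : R) := by
    simp
  have hv2 : (((-1 : Rˣ) * q : Rˣ) : R) = -((q : Rˣ) : R) := by simp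
  rw [hv1, hv2, neg_smul, neg_smul]
  have := hd''0
  rw [hd'', hd] at this
  calc ((gX⁻¹ : Rˣ) : R) • a X + -(((gX' ⁻¹: Rˣ) : R) • a X') + -(((q : Rˣ) : R) • a X'')
      = ((gX⁻¹ : Rˣ) : R) • a X - ((gX'⁻¹ : Rˣ) : R) • a X' - ((q : Rˣ) : R) • a X'' := by
        rw [sub_eq_add_neg, sub_eq_add_neg]
    _ = 0 := this

end Main

section Master

variable {R E : Type*} [Ring R] [Fintype E] {G : Subgroup Rˣ} {M : Matroid E}
  {a : Set E → (E → R)}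

lemma master_zero (hME : M.E = Set.univ)
    (ha : ∀ X, _root_.IsCocircuit M X → IsPrimitive G (a X) ∧ chainSupport (a X) = X)
    (hstar : ∀ X X' X'', ModularTriple M X X' X'' →
      ∃ p ∈ G, ∃ p' ∈ G, ∃ p'' ∈ G,
        ((p : Rˣ) : R) • a X + ((p' : Rˣ) : R) • a X' + ((p'' : Rˣ) : R) • a X'' = 0)
    {c : E → R} (hc : c ∈ Submodule.span R (a '' {X | _root_.IsCocircuit M X}))
    (hnocc : ∀ Y, _root_.IsCocircuit M Y → ¬ Y ⊆ chainSupport c) : c = 0 := by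
  classical
  have haU : ∀ {Y : Set E}, _root_.IsCocircuit M Y → ∀ {z : E}, z ∈ Y →
      ∃ g : Rˣ, g ∈ G ∧ a Y z = ((g : Rˣ) : R) := by
    intro Y hY z hz
    exact prim_unit (ha Y hY).1 (by rw [(ha Y hY).2]; exact hz)
  have haZ : ∀ {Y : Set E}, _root_.IsCocircuit M Y → ∀ {z : E}, z ∉ Y → a Y z = 0 := by
    intro Y hY z hz
    by_contra h
    exact hz ((ha Y hY).2 ▸ h)
  -- a base of the dual containing the support of c
  have hind : M✶.Indep (chainSupport c) := by
    by_contra hdep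
    obtain ⟨Y, hYsub, hY⟩ := exists_circuit_of_dep hdep
    exact hnocc Y hY hYsub
  obtain ⟨BN, hBN, hsubBN⟩ := hind.exists_isBase_superset
  set Bst : Set E := univ \ BN with hBstdef
  have hBst : M.IsBase Bst := by
    have := hBN.compl_isBase_of_dual
    rwa [hME] at this
  have hcompl : univ \ Bst = BN := compl_compl_eq hME BN
  have hczero : ∀ e ∈ Bst, c e = 0 := by
    intro e heB
    by_contra h
    exact heB.2 (hsubBN h)
  -- the fundamental cocircuit data
  set P : E → Prop := fun e => ∃ Y, _root_.IsCocircuit M Y ∧ Y ∩ Bst = {e} with hPdef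
  set w : E → (E → R) := fun e =>
    if h : P e then Ring.inverse (a h.choose e) • a h.choose else 0 with hwdef
  have hwP : ∀ (e : E) (h : P e),
      w e = Ring.inverse (a h.choose e) • a h.choose := fun e h => dif_pos h
  have hwnP : ∀ (e : E), ¬ P e → w e = 0 := fun e h => dif_neg h
  have hPB : ∀ e, P e → e ∈ Bst := by
    intro e h
    have h2 := h.choose_spec.2
    have : e ∈ h.choose ∩ Bst := by rw [h2]; exact rfl
    exact this.2
  set ψ : (E → R) → (E → R) := fun u => u - ∑ e, u e • w e with hψdef
  have hψ0 : ψ 0 = 0 := by simp [hψdef]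
  have hψadd : ∀ u v, ψ (u + v) = ψ u + ψ v := by
    intro u v
    simp only [hψdef]
    rw [Finset.sum_congr rfl (fun e _ => by
      show ((u + v) e) • w e = (u e) • w e + (v e) • w e
      simp [add_smul]), Finset.sum_add_distrib]
    abel
  have hψsmul : ∀ (r : R) u, ψ (r • u) = r • ψ u := by
    intro r u
    simp only [hψdef, smul_sub, Finset.smul_sum]
    congr 1
    refine Finset.sum_congr rfl (fun e _ => ?_)
    show ((r • u) e) • w e = r • ((u e) • w e)
    simp [mul_smul]
  -- every fundamental-type cocircuit is unique
  have huniq : ∀ e₀ (Y₁ Y₂ : Set E), _root_.IsCocircuit M Y₁ → _root_.IsCocircuit M Y₂ →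
      Y₁ ∩ Bst = {e₀} → Y₂ ∩ Bst = {e₀} → Y₁ = Y₂ := by
    intro e₀ Y₁ Y₂ h₁ h₂ hb₁ hb₂
    have hQE : M✶.E = univ := by rw [dual_ground, hME]
    have hsub : ∀ (Y : Set E), Y ∩ Bst = {e₀} → Y ⊆ insert e₀ BN := by
      intro Y hb z hz
      by_cases hzB : z ∈ Bst
      · have : z ∈ Y ∩ Bst := ⟨hz, hzB⟩
        rw [hb] at this
        exact Or.inl this
      · refine Or.inr ?_
        rw [← hcompl]
        exact ⟨mem_univ z, hzB⟩
    exact fundCircuit_unique hQE hBN.indep h₁ h₂ (hsub _ hb₁) (hsub _ hb₂)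
  -- the impossible case
  have hk0 : ∀ X, _root_.IsCocircuit M X → (X ∩ Bst).ncard ≠ 0 := by
    intro X hX h
    rw [Set.ncard_eq_zero (toFinite _)] at h
    have hXB : X ⊆ BN := by
      intro z hz
      have hzB : z ∉ Bst := fun hB => by
        have : z ∈ X ∩ Bst := ⟨hz, hB⟩
        rw [h] at this
        exact this
      rw [← hcompl]
      exact ⟨mem_univ z, hzB⟩
    exact hX.1 (hBN.indep.subset hXB)
  -- the main induction
  have main : ∀ n : ℕ, ∀ X : Set E, _root_.IsCocircuit M X → (X ∩ Bst).ncard ≤ n →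
      ψ (a X) = 0 := by
    intro n
    induction n with
    | zero =>
      intro X hX hle
      exact absurd (Nat.le_zero.mp hle) (hk0 X hX)
    | succ n ih =>
      intro X hX hle
      by_cases hn1 : (X ∩ Bst).ncard = 1
      · -- base case : fundamental cocircuit
        obtain ⟨e₀, he₀⟩ := Set.ncard_eq_one.mp hn1
        have hPe₀ : P e₀ := ⟨X, hX, he₀⟩
        have he₀X : e₀ ∈ X := by
          have : e₀ ∈ X ∩ Bst := by rw [he₀]; exact rfl
          exact this.1
        obtain ⟨g, hg, hge⟩ := haU hX he₀X
        have hcheq : hPe₀.choose = X :=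
          huniq e₀ _ _ hPe₀.choose_spec.1 hX hPe₀.choose_spec.2 he₀
        have hsum : ∑ e, (a X e) • w e = a X := by
          rw [Finset.sum_eq_single e₀]
          · rw [hwP e₀ hPe₀]
            rw [show (hPe₀.choose : Set E) = X from hcheq]
            rw [hge, Ring.inverse_unit, smul_smul, Units.mul_inv, one_smul]
          · intro e _ hne
            by_cases hPe : P e
            · have heB : e ∈ Bst := hPB e hPe
              have heX : e ∉ X := by
                intro hh
                have : e ∈ X ∩ Bst := ⟨hh, heB⟩
                rw [he₀] at this
                exact hne this
              rw [haZ hX heX, zero_smul]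
            · rw [hwnP e hPe, smul_zero]
          · intro h
            exact absurd (Finset.mem_univ e₀) h
        show a X - ∑ e, (a X e) • w e = 0
        rw [hsum, sub_self]
      · -- inductive step : the geometric construction
        have hk2 : 2 ≤ (X ∩ Bst).ncard := by
          have := hk0 X hX
          omega
        have hH : Hyp M (univ \ X) := IsCocircuit.compl_hyp hME hX
        have hBXsub : Bst \ X ⊆ univ \ X := fun z hz => ⟨mem_univ z, hz.2⟩
        have hBXind : M.Indep (Bst \ X) := hBst.indep.subset diff_subset
        obtain ⟨I₀, hI₀, hBXI₀⟩ := hBXind.subset_isBasis_of_subset hBXsub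
          (by rw [hME]; exact subset_univ _)
        have hspanU : M.Spanning univ := by rw [← hME]; exact M.ground_spanning
        have hI₀card : I₀.ncard + 1 = Bst.ncard := by
          have hHne : (univ \ X) ≠ univ := by
            intro h
            exact hH.2.1 (by rw [h]; exact hspanU)
          obtain ⟨x, hx⟩ := (Set.ne_univ_iff_exists_notMem _).mp hHne
          have hclI₀ : M.closure I₀ = univ \ X := by
            rw [hI₀.closure_eq_closure, hH.1]
          have hxcl : x ∉ M.closure I₀ := by rw [hclI₀]; exact hx
          have hxI : M.Indep (insert x I₀) := by
            rw [insert_indep_iff]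
            exact ⟨hI₀.indep, fun _ => ⟨hME ▸ mem_univ x, hxcl⟩⟩
          have hclins : M.closure (insert x I₀) = univ := by
            have h1 : M.closure (insert x (M.closure I₀)) = M.closure (insert x I₀) :=
              M.closure_insert_closure_eq_closure_insert x I₀
            rw [hclI₀] at h1
            rw [← h1]
            have := (hH.2.2 x hx)
            rw [spanning_iff_closure_eq (subsetE hME _), hME] at this
            exact this
          have hbase : M.IsBase (insert x I₀) := by
            rw [isBase_iff_indep_closure_eq]
            exact ⟨hxI, by rw [hclins, hME]⟩
          have hxnotI₀ : x ∉ I₀ := fun h => hx (hI₀.subset h)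
          have := hbase.ncard_eq_ncard_of_isBase hBst
          rw [Set.ncard_insert_of_notMem hxnotI₀ (toFinite _)] at this
          omega
        have hBXcard : (Bst \ X).ncard + (X ∩ Bst).ncard = Bst.ncard := by
          have hseteq : Bst \ X = Bst \ (X ∩ Bst) := by
            ext z; simp only [mem_diff, mem_inter_iff]; tauto
          rw [hseteq]
          exact Set.ncard_diff_add_ncard_of_subset inter_subset_right (toFinite _)
        have hss : Bst \ X ⊂ I₀ := by
          refine ssubset_of_subset_of_ne hBXI₀ ?_
          intro h
          rw [h] at hBXcard
          omega
        obtain ⟨y, hyI₀, hyBX⟩ := Set.exists_of_ssubset hss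
        set I : Set E := I₀ \ {y} with hIdef
        have hIind : M.Indep I := hI₀.indep.subset diff_subset
        have hIcard : I.ncard + 2 = Bst.ncard := by
          rw [hIdef]
          have := Set.ncard_diff_singleton_add_one hyI₀ (toFinite _)
          omega
        have hBXI : Bst \ X ⊆ I := fun z hz =>
          ⟨hBXI₀ hz, fun h => hyBX (h ▸ hz)⟩
        have hFH : M.closure I ⊆ univ \ X := by
          have h1 : I ⊆ univ \ X := (diff_subset.trans hI₀.subset)
          calc M.closure I ⊆ M.closure (univ \ X) := M.closure_subset_closure h1
            _ = univ \ X := hH.1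
        have hfF : ∀ z ∈ X, z ∉ M.closure I := fun z hz h => (hFH h).2 hz
        have hBXF : Bst \ X ⊆ M.closure I :=
          hBXI.trans (M.subset_closure I (hME ▸ subset_univ _))
        -- point hyperplanes
        have hHf : ∀ f ∈ X ∩ Bst, Hyp M (M.closure (insert f I)) := fun f hf =>
          hyp_point hME hIind hBst hIcard (hfF f hf.1)
        have hFHf : ∀ (f : E), M.closure I ⊆ M.closure (insert f I) := fun f =>
          M.closure_subset_closure (subset_insert f I)
        have hfHf : ∀ (f : E), f ∈ M.closure (insert f I) := fun f =>
          M.subset_closure _ (hME ▸ subset_univ _) (mem_insert f I)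
        -- two elements of X ∩ Bst in distinct points
        obtain ⟨f₁, hf₁⟩ := Set.nonempty_of_ncard_ne_zero (hk0 X hX)
        have hf₂ex : ∃ f₂ ∈ X ∩ Bst, f₂ ∉ M.closure (insert f₁ I) := by
          by_contra hall
          push_neg at hall
          have hBsub : Bst ⊆ M.closure (insert f₁ I) := by
            intro z hz
            by_cases hzX : z ∈ X
            · exact hall z ⟨hzX, hz⟩
            · exact (hFHf f₁) (hBXF ⟨hz, hzX⟩)
          have : M.closure Bst ⊆ M.closure (insert f₁ I) := by
            have := M.closure_subset_closure hBsub
            rwa [Matroid.closure_closure] at this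
          rw [hBst.closure_eq, hME] at this
          have huniv : M.closure (insert f₁ I) = univ :=
            Set.Subset.antisymm (hME ▸ M.closure_subset_ground _) this
          exact (hHf f₁ hf₁).2.1 (huniv ▸ hspanU)
        obtain ⟨f₂, hf₂, hf₂n⟩ := hf₂ex
        set X₁ : Set E := univ \ M.closure (insert f₁ I) with hX₁def
        set X₂ : Set E := univ \ M.closure (insert f₂ I) with hX₂def
        have hX₁ : _root_.IsCocircuit M X₁ := Hyp.compl_cocircuit hME (hHf f₁ hf₁)
        have hX₂ : _root_.IsCocircuit M X₂ := Hyp.compl_cocircuit hME (hHf f₂ hf₂)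
        have hcc₁ : univ \ X₁ = M.closure (insert f₁ I) :=
          compl_compl_eq hME _
        have hcc₂ : univ \ X₂ = M.closure (insert f₂ I) :=
          compl_compl_eq hME _
        have hneXX₁ : X ≠ X₁ := by
          intro h
          exact (h ▸ hf₁.1 : f₁ ∈ X₁).2 (hfHf f₁)
        have hneXX₂ : X ≠ X₂ := by
          intro h
          exact (h ▸ hf₂.1 : f₂ ∈ X₂).2 (hfHf f₂)
        have hneX₁X₂ : X₁ ≠ X₂ := by
          intro h
          have : M.closure (insert f₁ I) = M.closure (insert f₂ I) := by
            rw [← hcc₁, ← hcc₂, h]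
          exact hf₂n (this ▸ hfHf f₂)
        -- the modular triple
        have hseteq : univ \ (X ∪ X₁ ∪ X₂) = M.closure I := by
          ext z
          constructor
          · rintro ⟨-, hz⟩
            simp only [mem_union, not_or] at hz
            obtain ⟨⟨hzX, hzX₁⟩, hzX₂⟩ := hz
            have hzH : z ∈ univ \ X := ⟨mem_univ z, hzX⟩
            have hzH₁ : z ∈ M.closure (insert f₁ I) := by
              by_contra h
              exact hzX₁ ⟨mem_univ z, h⟩
            by_contra hzF
            have e1 := hyp_eq_point hME hIind hBst hIcard hH hFH ⟨hzH, hzF⟩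
            have e2 := hyp_eq_point hME hIind hBst hIcard (hHf f₁ hf₁) (hFHf f₁) ⟨hzH₁, hzF⟩
            have : f₁ ∈ univ \ X := by
              rw [e1, ← e2]
              exact hfHf f₁
            exact this.2 hf₁.1
          · intro hz
            refine ⟨mem_univ z, ?_⟩
            simp only [mem_union, not_or]
            refine ⟨⟨(hFH hz).2, ?_⟩, ?_⟩
            · intro h
              exact h.2 ((hFHf f₁) hz)
            · intro h
              exact h.2 ((hFHf f₂) hz)
        have htriple : ModularTriple M X X₁ X₂ := by
          refine ⟨hX, hX₁, hX₂, hneXX₁, hneXX₂, hneX₁X₂, ?_⟩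
          rw [hME]
          refine rankEq2_of_basis hME hBst ?_ hIcard
          rw [hseteq]
          exact hIind.isBasis_closure
        obtain ⟨p, hp, p₁, hp₁, p₂, hp₂, hrel⟩ := hstar X X₁ X₂ htriple
        -- cardinality decrease
        have hdec : ∀ (f : E), f ∈ X ∩ Bst →
            ((univ \ M.closure (insert f I)) ∩ Bst).ncard ≤ n := by
          intro f hf
          have hsub : (univ \ M.closure (insert f I)) ∩ Bst ⊆ (X ∩ Bst) \ {f} := by
            rintro z ⟨hz1, hz2⟩
            have hzF : z ∉ M.closure I := fun h => hz1.2 ((hFHf f) h)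
            have hzX : z ∈ X := by
              by_contra h
              exact hzF (hBXF ⟨hz2, h⟩)
            refine ⟨⟨hzX, hz2⟩, ?_⟩
            intro h
            rw [mem_singleton_iff] at h
            exact hz1.2 (h ▸ hfHf f)
          have h1 : ((univ \ M.closure (insert f I)) ∩ Bst).ncard ≤
              ((X ∩ Bst) \ {f}).ncard := Set.ncard_le_ncard hsub (toFinite _)
          have h2 := Set.ncard_diff_singleton_add_one hf (toFinite (X ∩ Bst))
          omega
        have hψ₁ : ψ (a X₁) = 0 := ih X₁ hX₁ (hdec f₁ hf₁)
        have hψ₂ : ψ (a X₂) = 0 := ih X₂ hX₂ (hdec f₂ hf₂)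
        -- conclude via the relation
        have happ := congrArg ψ hrel
        rw [hψ0, hψadd, hψadd, hψsmul, hψsmul, hψsmul, hψ₁, hψ₂, smul_zero, smul_zero,
          add_zero, add_zero] at happ
        have := congrArg (fun v => (((p⁻¹ : Rˣ) : R)) • v) happ
        simpa [smul_smul, Units.inv_mul] using this
  -- every chain in the span is killed by ψ
  have hspan : ∀ u ∈ Submodule.span R (a '' {X | _root_.IsCocircuit M X}), ψ u = 0 := by
    intro u hu
    induction hu using Submodule.span_induction with
    | mem x hx =>
      obtain ⟨X, hX, rfl⟩ := hx
      exact main ((X ∩ Bst).ncard) X hX le_rfl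
    | zero => exact hψ0
    | add x y _ _ hx hy => rw [hψadd, hx, hy, add_zero]
    | smul r x _ hx => rw [hψsmul, hx, smul_zero]
  have hψc : ψ c = 0 := hspan c hc
  have hψc' : ψ c = c := by
    show c - ∑ e, c e • w e = c
    have : ∀ e : E, c e • w e = 0 := by
      intro e
      by_cases hPe : P e
      · rw [hczero e (hPB e hPe), zero_smul]
      · rw [hwnP e hPe, smul_zero]
    rw [Finset.sum_congr rfl (fun e _ => this e), Finset.sum_const_zero, sub_zero]
  rw [← hψc', hψc]

end Master

section Backward

variable {R E : Type*} [Ring R] [Fintype E] {G : Subgroup Rˣ} {M : Matroid E}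
  {a : Set E → (E → R)}

lemma master_prop (hME : M.E = Set.univ)
    (ha : ∀ X, _root_.IsCocircuit M X → IsPrimitive G (a X) ∧ chainSupport (a X) = X)
    (hstar : ∀ X X' X'', ModularTriple M X X' X'' →
      ∃ p ∈ G, ∃ p' ∈ G, ∃ p'' ∈ G,
        ((p : Rˣ) : R) • a X + ((p' : Rˣ) : R) • a X' + ((p'' : Rˣ) : R) • a X'' = 0)
    {X : Set E} (hX : _root_.IsCocircuit M X)
    {c : E → R} (hc : c ∈ Submodule.span R (a '' {X | _root_.IsCocircuit M X}))
    (hsupp : chainSupport c ⊆ X) : ∃ r : R, c = r • a X := by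
  obtain ⟨e₀, he₀⟩ := IsCircuit.nonempty hX
  obtain ⟨g, hg, hge⟩ := prim_unit (ha X hX).1 (by rw [(ha X hX).2]; exact he₀)
  set d : E → R := c - ((c e₀) * ((g⁻¹ : Rˣ) : R)) • a X with hd
  have hdC : d ∈ Submodule.span R (a '' {X | _root_.IsCocircuit M X}) :=
    sub_mem hc (Submodule.smul_mem _ _ (Submodule.subset_span ⟨X, hX, rfl⟩))
  have hdapp : ∀ z, d z = c z - ((c e₀) * ((g⁻¹ : Rˣ) : R)) * a X z := by
    intro z; simp [hd]
  have hde₀ : d e₀ = 0 := by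
    rw [hdapp, hge, mul_assoc, ← Units.val_mul, inv_mul_cancel, Units.val_one, mul_one, sub_self]
  have hdsupp : chainSupport d ⊆ X \ {e₀} := by
    intro z hz
    constructor
    · by_contra hzX
      have hcz : c z = 0 := by
        by_contra h
        exact hzX (hsupp h)
      have haz : a X z = 0 := by
        by_contra h
        exact hzX ((ha X hX).2 ▸ h)
      exact hz (by rw [hdapp, hcz, haz, mul_zero, sub_zero])
    · rintro rfl
      exact hz hde₀
  have hd0 : d = 0 := by
    refine master_zero hME ha hstar hdC ?_
    intro Y hY hYsub
    have hYX : Y ⊆ X := (hYsub.trans hdsupp).trans diff_subset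
    have : Y = X := IsCircuit.eq_of_subset hY hX hYX
    have he₀Y : e₀ ∈ Y := this ▸ he₀
    exact ((hYsub.trans hdsupp) he₀Y).2 rfl
  refine ⟨(c e₀) * ((g⁻¹ : Rˣ) : R), ?_⟩
  have := sub_eq_zero.mp (hd ▸ hd0)
  exact this

lemma backward_dir (hME : M.E = Set.univ)
    (ha : ∀ X, _root_.IsCocircuit M X → IsPrimitive G (a X) ∧ chainSupport (a X) = X)
    (hstar : ∀ X X' X'', ModularTriple M X X' X'' →
      ∃ p ∈ G, ∃ p' ∈ G, ∃ p'' ∈ G,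
        ((p : Rˣ) : R) • a X + ((p' : Rˣ) : R) • a X' + ((p'' : Rˣ) : R) • a X'' = 0) :
    IsPChainGroup G (Submodule.span R (a '' {X | _root_.IsCocircuit M X})) ∧
      IsMatroidOf M ((Submodule.span R (a '' {X | _root_.IsCocircuit M X}) :
        Submodule R (E → R)) : Set (E → R)) := by
  set C := Submodule.span R (a '' {X | _root_.IsCocircuit M X}) with hC
  have haMem : ∀ {Y : Set E}, _root_.IsCocircuit M Y → a Y ∈ C := fun hY =>
    Submodule.subset_span ⟨_, hY, rfl⟩
  have haNe : ∀ {Y : Set E}, _root_.IsCocircuit M Y → a Y ≠ 0 := by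
    intro Y hY h0
    obtain ⟨z, hz⟩ := IsCircuit.nonempty hY
    have : z ∈ chainSupport (a Y) := by rw [(ha Y hY).2]; exact hz
    exact this (by rw [h0]; rfl)
  have hexcc : ∀ {c : E → R}, c ∈ C → c ≠ 0 → ∃ Y, _root_.IsCocircuit M Y ∧ Y ⊆ chainSupport c := by
    intro c hc hne
    by_contra h
    push_neg at h
    exact hne (master_zero hME ha hstar hc (fun Y hY => h Y hY))
  -- the support of an elementary chain is a cocircuit, and the chain is a multiple of `a`
  have helem : ∀ {c : E → R}, IsElementary (C : Set (E → R)) c →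
      _root_.IsCocircuit M (chainSupport c) ∧ ∃ r : R, c = r • a (chainSupport c) := by
    intro c hel
    obtain ⟨hcC, hcne, hmin⟩ := hel
    obtain ⟨Y, hY, hYsub⟩ := hexcc hcC hcne
    have hYeq : Y = chainSupport c := by
      by_contra hne
      refine hmin (a Y) (haMem hY) (haNe hY) ?_
      rw [(ha Y hY).2]
      exact ssubset_of_subset_of_ne hYsub hne
    subst hYeq
    exact ⟨hY, master_prop hME ha hstar hY hcC Set.Subset.rfl⟩
  constructor
  · -- IsPChainGroup
    intro c hel
    obtain ⟨hcc, r, hr⟩ := helem hel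
    exact ⟨r, a (chainSupport c), haMem hcc, (ha _ hcc).1, hr⟩
  · -- IsMatroidOf
    refine ⟨hME, fun X => ⟨?_, ?_⟩⟩
    · intro hX
      refine ⟨a X, ⟨haMem hX, haNe hX, ?_⟩, (ha X hX).2⟩
      intro c' hc' hne' hss
      rw [(ha X hX).2] at hss
      obtain ⟨Y, hY, hYsub⟩ := hexcc hc' hne'
      have hYX : Y ⊆ X := hYsub.trans hss.subset
      have : Y = X := IsCircuit.eq_of_subset hY hX hYX
      subst this
      exact absurd (hYsub.trans hss.subset) (fun _ => (hss.not_subset) hYsub)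
    · rintro ⟨c, hel, rfl⟩
      exact (helem hel).1

end Backward

end Aux

/-- Tutte's representability criterion: let `M` be a matroid on a finite set
`E` with cocircuit set `𝒞*`, `P = (R, G)` a skew partial field and, for each cocircuit `X`,
let `a X` be a `G`-primitive chain with support `X`.  Let `C` be the left `R`-submodule of
`R^E` generated by the chains `a X`.  Then `C` is a `P`-chain group with `M(C) = M` if and
only if for every modular triple of cocircuits `X, X', X''` there are `p, p', p'' ∈ G` with
`p • a X + p' • a X' + p'' • a X'' = 0`. -/
theorem statement9 {R E : Type*} [Ring R] [Fintype E]
    (G : Subgroup Rˣ) (hG : (-1 : Rˣ) ∈ G)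
    (M : Matroid E) (hME : M.E = Set.univ)
    (a : Set E → (E → R))
    (ha : ∀ X, _root_.IsCocircuit M X → IsPrimitive G (a X) ∧ chainSupport (a X) = X) :
    (IsPChainGroup G (Submodule.span R (a '' {X | _root_.IsCocircuit M X})) ∧
        IsMatroidOf M ((Submodule.span R (a '' {X | _root_.IsCocircuit M X}) :
          Submodule R (E → R)) : Set (E → R))) ↔
      (∀ X X' X'', ModularTriple M X X' X'' →
        ∃ p ∈ G, ∃ p' ∈ G, ∃ p'' ∈ G,
          ((p : Rˣ) : R) • a X + ((p' : Rˣ) : R) • a X' + ((p'' : Rˣ) : R) • a X'' = 0) := by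
  constructor
  · rintro ⟨hPCG, hMO⟩
    intro X X' X'' hT
    exact forward_dir hG hME ha hMO hT
  · intro hstar
    exact backward_dir hME ha hstar
end
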